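/- arXiv:1509.09040 — 3 statements merged into one kernel-verified Lean document; each statement's English description precedes it below -/
import Mathlib

section
/- Let B be a unital C*-algebra, H a complex Hilbert space, and φ : B → B(H) a unital 2-positive linear map. Then for all unitary elements a, b ∈ B, ‖φ(a*b) − φ(a)*φ(b)‖² ≤ ‖φ(a*a) − φ(a)*φ(a)‖ · ‖φ(b*b) − φ(b)*φ(b)‖. -/
open Complex Finset
open scoped ComplexConjugate

namespace GrussProofAux

variable {B : Type*} [CStarAlgebra B]
variable {H : Type*} [NormedAddCommGroup H] [InnerProductSpace ℂ H] [CompleteSpace H]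

local notation "⟪" x ", " y "⟫" => @inner ℂ _ _ x y

variable (φ : B →ₗ[ℂ] (H →L[ℂ] H))




def TwoPos (φ : B →ₗ[ℂ] (H →L[ℂ] H)) : Prop :=
  ∀ M : Matrix (Fin 2) (Fin 2) B,
      (∃ S : Matrix (Fin 2) (Fin 2) B, M = star S * S) →
      ∃ T : Matrix (Fin 2) (Fin 2) (H →L[ℂ] H), M.map φ = star T * T


lemma row (hp : TwoPos φ) (c d : B) :
    ∃ u0 u1 v0 v1 : H →L[ℂ] H,
      φ (star c * c) = star u0 * u0 + star u1 * u1 ∧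
      φ (star c * d) = star u0 * v0 + star u1 * v1 ∧
      φ (star d * c) = star v0 * u0 + star v1 * u1 ∧
      φ (star d * d) = star v0 * v0 + star v1 * v1 := by
  obtain ⟨T, hT⟩ := hp (star (!![c, d; 0, 0]) * !![c, d; 0, 0]) ⟨_, rfl⟩
  have e : ∀ i j, φ ((star (!![c, d; 0, 0]) * !![c, d; 0, 0]) i j) = (star T * T) i j := by
    intro i j
    rw [← Matrix.map_apply (f := (φ : B → H →L[ℂ] H)), hT]
  refine ⟨T 0 0, T 1 0, T 0 1, T 1 1, ?_, ?_, ?_, ?_⟩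
  · have := e 0 0
    simpa [Matrix.mul_apply, Matrix.star_eq_conjTranspose, Matrix.conjTranspose_apply,
      Fin.sum_univ_two] using this
  · have := e 0 1
    simpa [Matrix.mul_apply, Matrix.star_eq_conjTranspose, Matrix.conjTranspose_apply,
      Fin.sum_univ_two] using this
  · have := e 1 0
    simpa [Matrix.mul_apply, Matrix.star_eq_conjTranspose, Matrix.conjTranspose_apply,
      Fin.sum_univ_two] using this
  · have := e 1 1
    simpa [Matrix.mul_apply, Matrix.star_eq_conjTranspose, Matrix.conjTranspose_apply,
      Fin.sum_univ_two] using this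

lemma map_star_eq (hp : TwoPos φ) (c : B) : φ (star c) = star (φ c) := by
  obtain ⟨u0, u1, v0, v1, _, h2, h3, _⟩ := row φ hp 1 c
  have h2' : φ c = star u0 * v0 + star u1 * v1 := by simpa using h2
  have h3' : φ (star c) = star v0 * u0 + star v1 * u1 := by simpa using h3
  rw [h2', h3']
  simp [star_add, star_mul]




lemma geom_if {N : ℕ} {ξ : ℂ} (hξ : ξ ^ N = 1) (hN : N ≠ 0) :
    ∑ k ∈ range N, ξ ^ k = if ξ = 1 then (N : ℂ) else 0 := by
  split_ifs with h
  · subst h; simp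
  · rw [geom_sum_eq h, hξ]; simp

lemma star_pow_mul_pow {a : B} (ha1 : star a * a = 1) :
    ∀ r, (star a) ^ r * a ^ r = 1 := by
  intro r
  induction r with
  | zero => simp
  | succ r ih =>
    rw [pow_succ' (star a), pow_succ a, mul_assoc, ← mul_assoc ((star a) ^ r), ih, one_mul, ha1]

lemma star_pow_mul_pow_succ {a : B} (ha1 : star a * a = 1) (r : ℕ) :
    (star a) ^ r * a ^ (r + 1) = a := by
  rw [pow_succ a, ← mul_assoc, star_pow_mul_pow ha1, one_mul]

lemma star_pow_succ_mul_pow {a : B} (ha1 : star a * a = 1) (r : ℕ) :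
    (star a) ^ (r + 1) * a ^ r = star a := by
  rw [pow_succ' (star a), mul_assoc, star_pow_mul_pow ha1, mul_one]

/-- the Fejér-type element `g k = ∑ C(m,s) (ν^k)^s a^s` -/
noncomputable def gElt (a : B) (ν : ℂ) (m k : ℕ) : B :=
  ∑ s ∈ range (m + 1), ((m.choose s : ℂ) * (ν ^ k) ^ s) • a ^ s

noncomputable def HElt (a : B) (ν : ℂ) (m k : ℕ) : B :=
  star (gElt a ν m k) * gElt a ν m k

lemma HElt_star (a : B) (ν : ℂ) (m k : ℕ) : star (HElt a ν m k) = HElt a ν m k := by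
  rw [HElt, star_mul, star_star]

lemma HElt_expand (a : B) (ω : ℂ) (m k : ℕ) :
    HElt a (conj ω) m k = ∑ r ∈ range (m + 1), ∑ s ∈ range (m + 1),
      (((m.choose r * m.choose s : ℕ) : ℂ) * (ω ^ r * (conj ω) ^ s) ^ k)
        • ((star a) ^ r * a ^ s) := by
  rw [HElt, gElt, star_sum, Finset.sum_mul_sum]
  refine Finset.sum_congr rfl fun r _ => Finset.sum_congr rfl fun s _ => ?_
  rw [star_smul, star_pow, smul_mul_smul_comm]
  congr 1
  have h1 : star ((m.choose r : ℂ) * ((conj ω) ^ k) ^ r)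
      = (m.choose r : ℂ) * (ω ^ k) ^ r := by
    simp [Complex.star_def, map_mul, map_pow]
  rw [h1]
  push_cast
  rw [mul_pow, pow_right_comm ω r k, pow_right_comm (conj ω) s k]
  ring



lemma pow_crit {N : ℕ} {ω : ℂ} (hprim : IsPrimitiveRoot ω N) (hων : ω * conj ω = 1)
    {r s : ℕ} (hr : r < N) (hs : s < N) : ω ^ r * (conj ω) ^ s = 1 ↔ r = s := by
  constructor
  · intro h
    have hc1 : conj ω * ω = 1 := by rw [mul_comm]; exact hων
    have h2 : ω ^ r = ω ^ s := by
      have h3 := congrArg (· * ω ^ s) h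
      simpa [mul_assoc, ← mul_pow, hc1, one_pow] using h3
    exact hprim.pow_inj hr hs h2
  · rintro rfl; rw [← mul_pow, hων, one_pow]

lemma xi_pow_N {N : ℕ} {ω : ℂ} (hωN : ω ^ N = 1) (r s : ℕ) :
    (ω ^ r * (conj ω) ^ s) ^ N = 1 := by
  have hcN : (conj ω) ^ N = 1 := by rw [← map_pow, hωN, map_one]
  rw [mul_pow, pow_right_comm ω r N, pow_right_comm (conj ω) s N, hωN, hcN, one_pow, one_pow,
    one_mul]

lemma sum_H {a : B} (ha1 : star a * a = 1) {m N : ℕ} (hN : N = m + 2) {ω : ℂ}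
    (hprim : IsPrimitiveRoot ω N) (hων : ω * conj ω = 1) :
    ∑ k ∈ range N, HElt a (conj ω) m k
      = ((N * ∑ s ∈ range (m + 1), m.choose s * m.choose s : ℕ) : ℂ) • (1 : B) := by
  have hN0 : N ≠ 0 := by omega
  have hωN : ω ^ N = 1 := hprim.pow_eq_one
  simp_rw [HElt_expand a ω m]
  rw [Finset.sum_comm]
  refine Eq.trans (Finset.sum_congr rfl fun r _ => Finset.sum_comm) ?_
  have step : ∀ r ∈ range (m+1), ∀ s ∈ range (m+1),
      (∑ k ∈ range N, (((m.choose r * m.choose s : ℕ) : ℂ) * (ω ^ r * (conj ω) ^ s) ^ k)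
        • ((star a) ^ r * a ^ s))
      = if r = s then (((m.choose r * m.choose s : ℕ) : ℂ) * N) • ((star a) ^ r * a ^ s)
        else 0 := by
    intro r hr s hs
    rw [← Finset.sum_smul, ← Finset.mul_sum, geom_if (xi_pow_N hωN r s) hN0]
    rw [if_congr (pow_crit hprim hων (by simp at hr; omega) (by simp at hs; omega)) rfl rfl]
    split_ifs with h
    · rfl
    · simp
  refine Eq.trans (Finset.sum_congr rfl fun r hr =>
    Eq.trans (Finset.sum_congr rfl fun s hs => step r hr s hs) (Finset.sum_ite_eq _ r _)) ?_
  have step2 : ∀ r ∈ range (m+1),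
      (if r ∈ range (m+1) then (((m.choose r * m.choose r : ℕ) : ℂ) * N) • ((star a) ^ r * a ^ r)
        else 0)
      = (((m.choose r * m.choose r : ℕ) : ℂ) * N) • (1 : B) := by
    intro r hr
    rw [if_pos hr, star_pow_mul_pow ha1 r]
  refine Eq.trans (Finset.sum_congr rfl step2) ?_
  rw [← Finset.sum_smul]
  congr 1
  push_cast
  rw [Finset.mul_sum]
  exact Finset.sum_congr rfl fun r _ => by ring

lemma sum_Hω {a : B} (ha1 : star a * a = 1) {m N : ℕ} (hN : N = m + 2) {ω : ℂ}
    (hprim : IsPrimitiveRoot ω N) (hων : ω * conj ω = 1) :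
    ∑ k ∈ range N, (ω ^ k) • HElt a (conj ω) m k
      = ((N * ∑ s ∈ range m, m.choose s * m.choose (s + 1) : ℕ) : ℂ) • a := by
  have hN0 : N ≠ 0 := by omega
  have hωN : ω ^ N = 1 := hprim.pow_eq_one
  simp_rw [HElt_expand a ω m, Finset.smul_sum]
  have phase : ∀ k r s : ℕ,
      (ω ^ k) • ((((m.choose r * m.choose s : ℕ) : ℂ) * (ω ^ r * (conj ω) ^ s) ^ k)
        • ((star a) ^ r * a ^ s))
      = (((m.choose r * m.choose s : ℕ) : ℂ) * (ω ^ (r+1) * (conj ω) ^ s) ^ k)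
        • ((star a) ^ r * a ^ s) := by
    intro k r s
    rw [smul_smul]
    congr 1
    rw [show ω ^ (r+1) * (conj ω) ^ s = ω * (ω ^ r * (conj ω) ^ s) by rw [pow_succ']; ring,
      mul_pow]
    ring
  simp_rw [phase]
  rw [Finset.sum_comm]
  refine Eq.trans (Finset.sum_congr rfl fun r _ => Finset.sum_comm) ?_
  have step : ∀ r ∈ range (m+1), ∀ s ∈ range (m+1),
      (∑ k ∈ range N, (((m.choose r * m.choose s : ℕ) : ℂ) * (ω ^ (r+1) * (conj ω) ^ s) ^ k)
        • ((star a) ^ r * a ^ s))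
      = if r + 1 = s then (((m.choose r * m.choose s : ℕ) : ℂ) * N) • ((star a) ^ r * a ^ s)
        else 0 := by
    intro r hr s hs
    rw [← Finset.sum_smul, ← Finset.mul_sum, geom_if (xi_pow_N hωN (r+1) s) hN0]
    rw [if_congr (pow_crit hprim hων (by simp at hr; omega) (by simp at hs; omega)) rfl rfl]
    split_ifs with h
    · rfl
    · simp
  refine Eq.trans (Finset.sum_congr rfl fun r hr =>
    Eq.trans (Finset.sum_congr rfl fun s hs => step r hr s hs) (Finset.sum_ite_eq _ (r+1) _)) ?_
  rw [Finset.sum_range_succ, if_neg (by simp), add_zero]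
  have step2 : ∀ r ∈ range m,
      (if r + 1 ∈ range (m+1) then
        (((m.choose r * m.choose (r+1) : ℕ) : ℂ) * N) • ((star a) ^ r * a ^ (r+1)) else 0)
      = (((m.choose r * m.choose (r+1) : ℕ) : ℂ) * N) • a := by
    intro r hr
    rw [if_pos (by simp at hr ⊢; omega), star_pow_mul_pow_succ ha1 r]
  refine Eq.trans (Finset.sum_congr rfl step2) ?_
  rw [← Finset.sum_smul]
  congr 1
  push_cast
  rw [Finset.mul_sum]
  exact Finset.sum_congr rfl fun r _ => by ring


lemma sum_Hν {a : B} (ha1 : star a * a = 1) {m N : ℕ} (hN : N = m + 2) {ω : ℂ}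
    (hprim : IsPrimitiveRoot ω N) (hων : ω * conj ω = 1) :
    ∑ k ∈ range N, ((conj ω) ^ k) • HElt a (conj ω) m k
      = ((N * ∑ s ∈ range m, m.choose s * m.choose (s + 1) : ℕ) : ℂ) • star a := by
  have h := congrArg star (sum_Hω ha1 hN hprim hων)
  simp only [star_sum, star_smul, star_pow, HElt_star, star_natCast] at h
  simpa only [Complex.star_def] using h



lemma V_eq (m : ℕ) : ∑ s ∈ range (m + 1), m.choose s * m.choose s = (m + m).choose m := by
  rw [Nat.add_choose_eq, Finset.Nat.sum_antidiagonal_eq_sum_range_succ_mk]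
  exact Finset.sum_congr rfl fun s hs => by
    rw [Nat.choose_symm (by simp at hs; omega)]

lemma W_eq (m : ℕ) :
    ∑ s ∈ range m, m.choose s * m.choose (s + 1) = (m + m).choose (m + 1) := by
  rw [Nat.add_choose_eq, Finset.Nat.sum_antidiagonal_eq_sum_range_succ_mk]
  -- RHS : ∑ k ∈ range (m+2), m.choose k * m.choose (m+1-k)
  rw [Finset.sum_range_succ']
  -- = ∑ i ∈ range (m+1), m.choose (i+1) * m.choose (m+1-(i+1)) + m.choose 0 * m.choose (m+1-0)
  rw [Nat.choose_eq_zero_of_lt (by omega : m < m + 1 - 0)]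
  rw [mul_zero, add_zero]
  rw [Finset.sum_range_succ]
  rw [Nat.choose_eq_zero_of_lt (by omega : m < m + 1), zero_mul, add_zero]
  exact Finset.sum_congr rfl fun s hs => by
    have hsm : s < m := by simpa using hs
    rw [show m + 1 - (s + 1) = m - s by omega, Nat.choose_symm (by omega), mul_comm]

lemma WV_rel (m : ℕ) :
    (∑ s ∈ range m, m.choose s * m.choose (s + 1)) * (m + 1)
      = (∑ s ∈ range (m + 1), m.choose s * m.choose s) * m := by
  rw [V_eq, W_eq]
  have h := Nat.choose_succ_right_eq (m + m) m
  rw [h]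
  congr 1
  omega

lemma V_pos (m : ℕ) : 0 < ∑ s ∈ range (m + 1), m.choose s * m.choose s := by
  have : 0 < m.choose 0 * m.choose 0 := by simp
  calc 0 < m.choose 0 * m.choose 0 := this
    _ ≤ _ := Finset.single_le_sum (f := fun s => m.choose s * m.choose s)
        (fun i _ => Nat.zero_le _) (by simp)

lemma two_cs (a1 b1 a2 b2 : ℝ) (ha1 : 0 ≤ a1) (hb1 : 0 ≤ b1) (ha2 : 0 ≤ a2) (hb2 : 0 ≤ b2) :
    a1 * b1 + a2 * b2 ≤ Real.sqrt (a1 ^ 2 + a2 ^ 2) * Real.sqrt (b1 ^ 2 + b2 ^ 2) := by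
  rw [← Real.sqrt_mul (by positivity)]
  rw [Real.le_sqrt (by positivity) (by positivity)]
  nlinarith [sq_nonneg (a1 * b2 - a2 * b1)]

lemma move1 (u : H →L[ℂ] H) (w z : H) : ⟪w, (star u) z⟫ = ⟪u w, z⟫ := by
  rw [ContinuousLinearMap.star_eq_adjoint, ContinuousLinearMap.adjoint_inner_right]

lemma move2 (u v : H →L[ℂ] H) (w z : H) : ⟪w, (star u * v) z⟫ = ⟪u w, v z⟫ := by
  rw [ContinuousLinearMap.mul_apply, move1]


lemma rowCS (φ : B →ₗ[ℂ] (H →L[ℂ] H)) (hp : TwoPos φ) (c d : B) (ξ η ζ : H) :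
    ∃ p q : ℝ, 0 ≤ p ∧ 0 ≤ q ∧
      ((p : ℂ) = ⟪ξ, (φ (star c * c)) ξ⟫) ∧
      ((q : ℂ) = ⟪η, (φ (star d * d)) η⟫ - ⟪η, (φ (star d * c)) ζ⟫
                - ⟪ζ, (φ (star c * d)) η⟫ + ⟪ζ, (φ (star c * c)) ζ⟫) ∧
      ‖⟪ξ, (φ (star c * d)) η - (φ (star c * c)) ζ⟫‖ ≤ Real.sqrt p * Real.sqrt q := by
  obtain ⟨u0, u1, v0, v1, hcc, hcd, hdc, hdd⟩ := row φ hp c d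
  refine ⟨‖u0 ξ‖ ^ 2 + ‖u1 ξ‖ ^ 2, ‖v0 η - u0 ζ‖ ^ 2 + ‖v1 η - u1 ζ‖ ^ 2,
    by positivity, by positivity, ?_, ?_, ?_⟩
  · rw [hcc]
    simp only [ContinuousLinearMap.add_apply, inner_add_right, move2,
      inner_self_eq_norm_sq_to_K]
    norm_cast
  · have e1 : ((‖v0 η - u0 ζ‖ ^ 2 + ‖v1 η - u1 ζ‖ ^ 2 : ℝ) : ℂ)
        = ⟪v0 η - u0 ζ, v0 η - u0 ζ⟫ + ⟪v1 η - u1 ζ, v1 η - u1 ζ⟫ := by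
      rw [inner_self_eq_norm_sq_to_K, inner_self_eq_norm_sq_to_K]
      norm_cast
    rw [e1, hdd, hdc, hcd, hcc]
    simp only [ContinuousLinearMap.add_apply, inner_add_right, inner_sub_left,
      inner_sub_right, move2]
    ring
  · have eT : ⟪ξ, (φ (star c * d)) η - (φ (star c * c)) ζ⟫
        = ⟪u0 ξ, v0 η - u0 ζ⟫ + ⟪u1 ξ, v1 η - u1 ζ⟫ := by
      rw [hcd, hcc]
      simp only [ContinuousLinearMap.add_apply, inner_add_right, inner_sub_right, move2]
      ring
    rw [eT]
    refine le_trans (norm_add_le _ _) ?_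
    refine le_trans (add_le_add (norm_inner_le_norm _ _) (norm_inner_le_norm _ _)) ?_
    exact two_cs _ _ _ _ (norm_nonneg _) (norm_nonneg _) (norm_nonneg _) (norm_nonneg _)

lemma key_m (φ : B →ₗ[ℂ] (H →L[ℂ] H)) (hp : TwoPos φ) (hunital : φ 1 = 1)
    {a b : B} (ha1 : star a * a = 1) (hb1 : star b * b = 1) (x y : H) (m : ℕ) :
    0 ≤ (((m + 2) * ∑ s ∈ range (m + 1), m.choose s * m.choose s : ℕ) : ℝ)
          * (‖x‖ ^ 2 + ‖(φ a) x‖ ^ 2)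
        - 2 * (((m + 2) * ∑ s ∈ range m, m.choose s * m.choose (s + 1) : ℕ) : ℝ)
          * ‖(φ a) x‖ ^ 2
    ∧ 0 ≤ (((m + 2) * ∑ s ∈ range (m + 1), m.choose s * m.choose s : ℕ) : ℝ)
          * (‖y‖ ^ 2 - ‖(φ b) y‖ ^ 2)
    ∧ ((((m + 2) * ∑ s ∈ range m, m.choose s * m.choose (s + 1) : ℕ) : ℝ)
          * ‖⟪x, (φ (star a * b) - star (φ a) * φ b) y⟫‖) ^ 2
      ≤ ((((m + 2) * ∑ s ∈ range (m + 1), m.choose s * m.choose s : ℕ) : ℝ)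
            * (‖x‖ ^ 2 + ‖(φ a) x‖ ^ 2)
          - 2 * (((m + 2) * ∑ s ∈ range m, m.choose s * m.choose (s + 1) : ℕ) : ℝ)
            * ‖(φ a) x‖ ^ 2)
        * ((((m + 2) * ∑ s ∈ range (m + 1), m.choose s * m.choose s : ℕ) : ℝ)
            * (‖y‖ ^ 2 - ‖(φ b) y‖ ^ 2)) := by
  classical
  set N : ℕ := m + 2 with hNdef
  have hN0 : N ≠ 0 := by omega
  set ω : ℂ := Complex.exp (2 * Real.pi * Complex.I / N) with hω
  have hprim : IsPrimitiveRoot ω N := Complex.isPrimitiveRoot_exp N hN0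
  have hconj : conj ω = Complex.exp (-(2 * Real.pi * Complex.I / N)) := by
    rw [hω, ← Complex.exp_conj]
    congr 1
    simp [map_div₀, Complex.conj_I, Complex.conj_ofReal, map_ofNat]
    ring
  have hων : ω * conj ω = 1 := by
    rw [hconj, hω, ← Complex.exp_add]
    simp
  set V : ℕ := ∑ s ∈ range (m + 1), m.choose s * m.choose s with hVdef
  set W : ℕ := ∑ s ∈ range m, m.choose s * m.choose (s + 1) with hWdef
  set X : H →L[ℂ] H := φ a with hX
  set Z : H →L[ℂ] H := φ b with hZ
  set g : ℕ → B := fun k => gElt a (conj ω) m k with hg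
  -- basic sum identities over B
  have SH : ∑ k ∈ range N, star (g k) * g k = ((N * V : ℕ) : ℂ) • (1 : B) :=
    sum_H ha1 hNdef hprim hων
  have SHω : ∑ k ∈ range N, (ω ^ k) • (star (g k) * g k) = ((N * W : ℕ) : ℂ) • a :=
    sum_Hω ha1 hNdef hprim hων
  have SHν : ∑ k ∈ range N, ((conj ω) ^ k) • (star (g k) * g k) = ((N * W : ℕ) : ℂ) • star a :=
    sum_Hν ha1 hNdef hprim hων
  -- operator-level sums
  have OV : ∑ k ∈ range N, φ (star (g k) * g k) = ((N * V : ℕ) : ℂ) • (1 : H →L[ℂ] H) := by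
    rw [← map_sum, SH, map_smul, hunital]
  have OVb : ∑ k ∈ range N, φ (star (g k) * (g k * b)) = ((N * V : ℕ) : ℂ) • Z := by
    have e : ∑ k ∈ range N, star (g k) * (g k * b) = ((N * V : ℕ) : ℂ) • b := by
      calc ∑ k ∈ range N, star (g k) * (g k * b)
          = ∑ k ∈ range N, (star (g k) * g k) * b :=
            Finset.sum_congr rfl fun k _ => (mul_assoc _ _ _).symm
        _ = (∑ k ∈ range N, star (g k) * g k) * b := (Finset.sum_mul _ _ _).symm
        _ = ((N * V : ℕ) : ℂ) • b := by rw [SH, smul_mul_assoc, one_mul]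
    rw [← map_sum, e, map_smul, hZ]
  have OVdc : ∑ k ∈ range N, φ (star (g k * b) * g k) = ((N * V : ℕ) : ℂ) • star Z := by
    have e : ∑ k ∈ range N, star (g k * b) * g k = ((N * V : ℕ) : ℂ) • star b := by
      calc ∑ k ∈ range N, star (g k * b) * g k
          = ∑ k ∈ range N, star b * (star (g k) * g k) :=
            Finset.sum_congr rfl fun k _ => by rw [star_mul, mul_assoc]
        _ = star b * ∑ k ∈ range N, star (g k) * g k := (Finset.mul_sum _ _ _).symm
        _ = ((N * V : ℕ) : ℂ) • star b := by rw [SH, mul_smul_comm, mul_one]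
    rw [← map_sum, e, map_smul, map_star_eq φ hp, hZ]
  have OVdd : ∑ k ∈ range N, φ (star (g k * b) * (g k * b))
      = ((N * V : ℕ) : ℂ) • (1 : H →L[ℂ] H) := by
    have e : ∑ k ∈ range N, star (g k * b) * (g k * b) = ((N * V : ℕ) : ℂ) • (1 : B) := by
      calc ∑ k ∈ range N, star (g k * b) * (g k * b)
          = ∑ k ∈ range N, star b * ((star (g k) * g k) * b) :=
            Finset.sum_congr rfl fun k _ => by rw [star_mul]; noncomm_ring
        _ = star b * ((∑ k ∈ range N, star (g k) * g k) * b) := by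
            rw [← Finset.mul_sum, ← Finset.sum_mul]
        _ = ((N * V : ℕ) : ℂ) • (1 : B) := by
            rw [SH, smul_mul_assoc, one_mul, mul_smul_comm, hb1]
    rw [← map_sum, e, map_smul, hunital]
  have OWa : ∑ k ∈ range N, ((conj ω) ^ k) • φ (star (g k) * g k)
      = ((N * W : ℕ) : ℂ) • (star X) := by
    calc ∑ k ∈ range N, ((conj ω) ^ k) • φ (star (g k) * g k)
        = φ (∑ k ∈ range N, ((conj ω) ^ k) • (star (g k) * g k)) := by
          rw [map_sum]; exact Finset.sum_congr rfl fun k _ => (map_smul φ _ _).symm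
      _ = ((N * W : ℕ) : ℂ) • (star X) := by
          rw [SHν, map_smul, map_star_eq φ hp, hX]
  have OWc : ∑ k ∈ range N, (ω ^ k) • φ (star (g k) * g k) = ((N * W : ℕ) : ℂ) • X := by
    calc ∑ k ∈ range N, (ω ^ k) • φ (star (g k) * g k)
        = φ (∑ k ∈ range N, (ω ^ k) • (star (g k) * g k)) := by
          rw [map_sum]; exact Finset.sum_congr rfl fun k _ => (map_smul φ _ _).symm
      _ = ((N * W : ℕ) : ℂ) • X := by rw [SHω, map_smul, hX]
  have OWb : ∑ k ∈ range N, ((conj ω) ^ k) • φ (star (g k) * (g k * b))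
      = ((N * W : ℕ) : ℂ) • φ (star a * b) := by
    calc ∑ k ∈ range N, ((conj ω) ^ k) • φ (star (g k) * (g k * b))
        = φ (∑ k ∈ range N, (((conj ω) ^ k) • (star (g k) * g k)) * b) := by
          rw [map_sum]
          exact Finset.sum_congr rfl fun k _ => by
            rw [smul_mul_assoc, mul_assoc, map_smul]
      _ = ((N * W : ℕ) : ℂ) • φ (star a * b) := by
          rw [← Finset.sum_mul, SHν, smul_mul_assoc, map_smul]
  -- the vectors
  set sv : ℕ → H := fun k => (ω ^ k) • x - X x with hsv
  -- per-k Cauchy-Schwarz data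
  choose p q hp0 hq0 hpc hqc hcs using
    fun k : ℕ => rowCS φ hp (g k) (g k * b) (sv k) y (Z y)
  have pull : ∀ (L : ℕ → H →L[ℂ] H) (u v : H),
      ∑ k ∈ range N, ⟪u, (L k) v⟫ = ⟪u, (∑ k ∈ range N, L k) v⟫ := by
    intro L u v
    rw [ContinuousLinearMap.sum_apply, inner_sum]
  have smul_pull : ∀ (cc : ℂ) (A : H →L[ℂ] H) (u v : H),
      cc * ⟪u, A v⟫ = ⟪u, (cc • A) v⟫ := by
    intro cc A u v
    rw [ContinuousLinearMap.smul_apply, inner_smul_right]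
  have hc1 : ∀ k : ℕ, ((conj ω) ^ k) * (ω ^ k) = 1 := by
    intro k
    rw [← mul_pow, mul_comm, hων, one_pow]
  have inner_self_c : ∀ v : H, ⟪v, v⟫ = ((‖v‖ ^ 2 : ℝ) : ℂ) := by
    intro v
    rw [inner_self_eq_norm_sq_to_K]
    norm_cast
  -- sum of the cross terms
  have tSum : ∑ k ∈ range N, ⟪sv k, (φ (star (g k) * (g k * b))) y - (φ (star (g k) * g k)) (Z y)⟫
      = ((N * W : ℕ) : ℂ) * ⟪x, (φ (star a * b) - star X * Z) y⟫ := by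
    have e1 : ∀ k ∈ range N,
        ⟪sv k, (φ (star (g k) * (g k * b))) y - (φ (star (g k) * g k)) (Z y)⟫
        = (((conj ω) ^ k) * ⟪x, (φ (star (g k) * (g k * b))) y⟫
            - ((conj ω) ^ k) * ⟪x, (φ (star (g k) * g k)) (Z y)⟫)
          - (⟪X x, (φ (star (g k) * (g k * b))) y⟫
            - ⟪X x, (φ (star (g k) * g k)) (Z y)⟫) := by
      intro k _
      simp only [hsv, inner_sub_left, inner_sub_right, inner_smul_left, map_pow]
      ring
    rw [Finset.sum_congr rfl e1, Finset.sum_sub_distrib, Finset.sum_sub_distrib,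
      Finset.sum_sub_distrib]
    simp only [smul_pull]
    rw [pull, pull, pull, pull, OWb, OWa, OVb, OV]
    simp only [ContinuousLinearMap.smul_apply, ContinuousLinearMap.one_apply,
      inner_smul_right, inner_sub_right, ContinuousLinearMap.sub_apply,
      ContinuousLinearMap.mul_apply]
    ring
  -- sum of the p's
  have pSum : ∑ k ∈ range N, p k
      = ((N * V : ℕ) : ℝ) * (‖x‖ ^ 2 + ‖X x‖ ^ 2) - 2 * ((N * W : ℕ) : ℝ) * ‖X x‖ ^ 2 := by
    have e0 : ∀ k ∈ range N, ((p k : ℝ) : ℂ)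
        = ⟪x, (φ (star (g k) * g k)) x⟫
          - ((conj ω) ^ k) * ⟪x, (φ (star (g k) * g k)) (X x)⟫
          - (ω ^ k) * ⟪X x, (φ (star (g k) * g k)) x⟫
          + ⟪X x, (φ (star (g k) * g k)) (X x)⟫ := by
      intro k _
      rw [hpc k]
      simp only [hsv, map_sub, map_smul, inner_sub_left, inner_sub_right, inner_smul_left,
        inner_smul_right, map_pow]
      linear_combination ⟪x, (φ (star (g k) * g k)) x⟫ * hc1 k
    have e1 : ((∑ k ∈ range N, p k : ℝ) : ℂ)
        = ((((N * V : ℕ) : ℝ) * (‖x‖ ^ 2 + ‖X x‖ ^ 2)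
            - 2 * ((N * W : ℕ) : ℝ) * ‖X x‖ ^ 2 : ℝ) : ℂ) := by
      push_cast [Complex.ofReal_sum]
      rw [Finset.sum_congr rfl e0]
      rw [Finset.sum_add_distrib, Finset.sum_sub_distrib, Finset.sum_sub_distrib]
      simp only [smul_pull]
      rw [pull, pull, pull, pull, OV, OWa, OWc]
      simp only [ContinuousLinearMap.smul_apply, ContinuousLinearMap.one_apply,
        inner_smul_right, move1, inner_self_c]
      push_cast
      ring
    exact_mod_cast e1
  -- sum of the q's
  have qSum : ∑ k ∈ range N, q k = ((N * V : ℕ) : ℝ) * (‖y‖ ^ 2 - ‖Z y‖ ^ 2) := by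
    have e1 : ((∑ k ∈ range N, q k : ℝ) : ℂ)
        = ((((N * V : ℕ) : ℝ) * (‖y‖ ^ 2 - ‖Z y‖ ^ 2) : ℝ) : ℂ) := by
      push_cast [Complex.ofReal_sum]
      rw [Finset.sum_congr rfl fun k _ => hqc k]
      rw [Finset.sum_add_distrib, Finset.sum_sub_distrib, Finset.sum_sub_distrib]
      rw [pull, pull, pull, pull, OVdd, OVdc, OVb, OV]
      simp only [ContinuousLinearMap.smul_apply, ContinuousLinearMap.one_apply,
        inner_smul_right, move1, inner_self_c]
      push_cast
      ring
    exact_mod_cast e1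
  -- assembling
  have hpsum0 : (0:ℝ) ≤ ∑ k ∈ range N, p k := Finset.sum_nonneg fun k _ => hp0 k
  have hqsum0 : (0:ℝ) ≤ ∑ k ∈ range N, q k := Finset.sum_nonneg fun k _ => hq0 k
  have main : ((N * W : ℕ) : ℝ) * ‖⟪x, (φ (star a * b) - star X * Z) y⟫‖
      ≤ Real.sqrt (∑ k ∈ range N, p k) * Real.sqrt (∑ k ∈ range N, q k) := by
    have e1 : ((N * W : ℕ) : ℝ) * ‖⟪x, (φ (star a * b) - star X * Z) y⟫‖
        = ‖∑ k ∈ range N, ⟪sv k, (φ (star (g k) * (g k * b))) y - (φ (star (g k) * g k)) (Z y)⟫‖ := by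
      rw [tSum, norm_mul, Complex.norm_natCast]
    rw [e1]
    refine le_trans (norm_sum_le _ _) ?_
    refine le_trans (Finset.sum_le_sum fun k _ => hcs k) ?_
    have hcs2 : (∑ k ∈ range N, Real.sqrt (p k) * Real.sqrt (q k)) ^ 2
        ≤ (∑ k ∈ range N, p k) * (∑ k ∈ range N, q k) := by
      have h := Finset.sum_mul_sq_le_sq_mul_sq (range N)
        (fun k => Real.sqrt (p k)) (fun k => Real.sqrt (q k))
      calc (∑ k ∈ range N, Real.sqrt (p k) * Real.sqrt (q k)) ^ 2
          ≤ (∑ k ∈ range N, Real.sqrt (p k) ^ 2) * (∑ k ∈ range N, Real.sqrt (q k) ^ 2) := h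
        _ = (∑ k ∈ range N, p k) * (∑ k ∈ range N, q k) := by
            rw [Finset.sum_congr rfl fun k _ => Real.sq_sqrt (hp0 k),
              Finset.sum_congr rfl fun k _ => Real.sq_sqrt (hq0 k)]
    have hnn : (0:ℝ) ≤ ∑ k ∈ range N, Real.sqrt (p k) * Real.sqrt (q k) :=
      Finset.sum_nonneg fun k _ => mul_nonneg (Real.sqrt_nonneg _) (Real.sqrt_nonneg _)
    rw [← Real.sqrt_mul hpsum0]
    exact (Real.le_sqrt hnn (mul_nonneg hpsum0 hqsum0)).2 hcs2
  refine ⟨by rw [← pSum]; exact hpsum0, by rw [← qSum]; exact hqsum0, ?_⟩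
  rw [← pSum, ← qSum]
  calc (((N * W : ℕ) : ℝ) * ‖⟪x, (φ (star a * b) - star X * Z) y⟫‖) ^ 2
      ≤ (Real.sqrt (∑ k ∈ range N, p k) * Real.sqrt (∑ k ∈ range N, q k)) ^ 2 := by
        refine pow_le_pow_left₀ ?_ main 2
        positivity
    _ = (∑ k ∈ range N, p k) * (∑ k ∈ range N, q k) := by
        rw [mul_pow, Real.sq_sqrt hpsum0, Real.sq_sqrt hqsum0]


theorem final
    (φ : B →ₗ[ℂ] (H →L[ℂ] H))
    (hunital : φ 1 = 1)
    (h2pos : ∀ M : Matrix (Fin 2) (Fin 2) B,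
      (∃ S : Matrix (Fin 2) (Fin 2) B, M = star S * S) →
      ∃ T : Matrix (Fin 2) (Fin 2) (H →L[ℂ] H), M.map φ = star T * T)
    (a b : B) (ha : a ∈ unitary B) (hb : b ∈ unitary B) :
    ‖φ (star a * b) - star (φ a) * φ b‖ ^ 2 ≤
      ‖φ (star a * a) - star (φ a) * φ a‖ * ‖φ (star b * b) - star (φ b) * φ b‖ := by
  have hp : TwoPos φ := h2pos
  have ha1 : star a * a = 1 := (Unitary.mem_iff.mp ha).1
  have hb1 : star b * b = 1 := (Unitary.mem_iff.mp hb).1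
  set X : H →L[ℂ] H := φ a with hX
  set Z : H →L[ℂ] H := φ b with hZ
  set RA : ℝ := ‖φ (star a * a) - star X * X‖ with hRA
  set RB : ℝ := ‖φ (star b * b) - star Z * Z‖ with hRB
  have inner_self_c : ∀ v : H, ⟪v, v⟫ = ((‖v‖ ^ 2 : ℝ) : ℂ) := by
    intro v
    rw [inner_self_eq_norm_sq_to_K]
    norm_cast
  -- quadratic form bounds
  have hGA : ∀ v : H, ‖v‖ ^ 2 - ‖X v‖ ^ 2 ≤ RA * ‖v‖ ^ 2 := by
    intro v
    have e : ((‖v‖ ^ 2 - ‖X v‖ ^ 2 : ℝ) : ℂ) = ⟪v, (φ (star a * a) - star X * X) v⟫ := by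
      rw [ha1, hunital]
      simp only [ContinuousLinearMap.sub_apply, ContinuousLinearMap.one_apply,
        ContinuousLinearMap.mul_apply, inner_sub_right, move1, inner_self_c]
      push_cast
      ring
    calc ‖v‖ ^ 2 - ‖X v‖ ^ 2 ≤ |‖v‖ ^ 2 - ‖X v‖ ^ 2| := le_abs_self _
      _ = ‖((‖v‖ ^ 2 - ‖X v‖ ^ 2 : ℝ) : ℂ)‖ := by rw [Complex.norm_real, Real.norm_eq_abs]
      _ = ‖⟪v, (φ (star a * a) - star X * X) v⟫‖ := by rw [e]
      _ ≤ ‖v‖ * ‖(φ (star a * a) - star X * X) v‖ := norm_inner_le_norm _ _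
      _ ≤ ‖v‖ * (RA * ‖v‖) := by
          refine mul_le_mul_of_nonneg_left ?_ (norm_nonneg _)
          exact ContinuousLinearMap.le_opNorm _ _
      _ = RA * ‖v‖ ^ 2 := by ring
  have hGB : ∀ v : H, ‖v‖ ^ 2 - ‖Z v‖ ^ 2 ≤ RB * ‖v‖ ^ 2 := by
    intro v
    have e : ((‖v‖ ^ 2 - ‖Z v‖ ^ 2 : ℝ) : ℂ) = ⟪v, (φ (star b * b) - star Z * Z) v⟫ := by
      rw [hb1, hunital]
      simp only [ContinuousLinearMap.sub_apply, ContinuousLinearMap.one_apply,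
        ContinuousLinearMap.mul_apply, inner_sub_right, move1, inner_self_c]
      push_cast
      ring
    calc ‖v‖ ^ 2 - ‖Z v‖ ^ 2 ≤ |‖v‖ ^ 2 - ‖Z v‖ ^ 2| := le_abs_self _
      _ = ‖((‖v‖ ^ 2 - ‖Z v‖ ^ 2 : ℝ) : ℂ)‖ := by rw [Complex.norm_real, Real.norm_eq_abs]
      _ = ‖⟪v, (φ (star b * b) - star Z * Z) v⟫‖ := by rw [e]
      _ ≤ ‖v‖ * ‖(φ (star b * b) - star Z * Z) v‖ := norm_inner_le_norm _ _
      _ ≤ ‖v‖ * (RB * ‖v‖) := by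
          refine mul_le_mul_of_nonneg_left ?_ (norm_nonneg _)
          exact ContinuousLinearMap.le_opNorm _ _
      _ = RB * ‖v‖ ^ 2 := by ring
  -- nonnegativity of the b-side quadratic form
  have hβ : ∀ y : H, 0 ≤ ‖y‖ ^ 2 - ‖Z y‖ ^ 2 := by
    intro y
    have h0 := (key_m φ hp hunital ha1 hb1 0 y 0).2.1
    rw [← hZ] at h0
    have e : (((0 + 2) * ∑ s ∈ range (0 + 1), Nat.choose 0 s * Nat.choose 0 s : ℕ) : ℝ)
        = 2 := by norm_num
    rw [e] at h0
    linarith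
  -- the central inequality
  have key : ∀ x y : H, ‖⟪x, (φ (star a * b) - star X * Z) y⟫‖ ^ 2
      ≤ (‖x‖ ^ 2 - ‖X x‖ ^ 2) * (‖y‖ ^ 2 - ‖Z y‖ ^ 2) := by
    intro x y
    set L : ℝ := ‖⟪x, (φ (star a * b) - star X * Z) y⟫‖ with hL
    have step : ∀ m : ℕ, ((m : ℝ) / (m + 1) * L) ^ 2
        ≤ (‖x‖ ^ 2 + ‖X x‖ ^ 2 - 2 * ((m : ℝ) / (m + 1)) * ‖X x‖ ^ 2)
          * (‖y‖ ^ 2 - ‖Z y‖ ^ 2) := by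
      intro m
      obtain ⟨h1, h2, h3⟩ := key_m φ hp hunital ha1 hb1 x y m
      rw [← hX, ← hZ] at h3
      set Vr : ℝ := ((∑ s ∈ range (m + 1), m.choose s * m.choose s : ℕ) : ℝ) with hVr
      set Wr : ℝ := ((∑ s ∈ range m, m.choose s * m.choose (s + 1) : ℕ) : ℝ) with hWr
      set Nr : ℝ := ((m + 2 : ℕ) : ℝ) with hNr
      rw [Nat.cast_mul, Nat.cast_mul, ← hVr, ← hWr, ← hNr, ← hL] at h3
      have hVpos : 0 < Vr := by rw [hVr]; exact_mod_cast V_pos m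
      have hWnn : 0 ≤ Wr := by rw [hWr]; positivity
      have hNpos : 0 < Nr := by rw [hNr]; positivity
      have hWV : Wr * ((m : ℝ) + 1) = Vr * m := by
        rw [hVr, hWr]; exact_mod_cast WV_rel m
      have hm1 : ((m : ℝ) + 1) ≠ 0 := by positivity
      have hfrac : (m : ℝ) / (m + 1) = Wr / Vr := by
        rw [div_eq_div_iff hm1 (ne_of_gt hVpos)]
        linarith [hWV]
      rw [hfrac]
      have hc : (0 : ℝ) < (Nr * Vr) ^ 2 := by positivity
      refine (mul_le_mul_iff_of_pos_right hc).mp ?_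
      have key2 : ((Wr / Vr) * L) ^ 2 * (Nr * Vr) ^ 2 = ((Nr * Wr) * L) ^ 2 := by
        field_simp
      have key3 : ((‖x‖ ^ 2 + ‖X x‖ ^ 2 - 2 * (Wr / Vr) * ‖X x‖ ^ 2)
            * (‖y‖ ^ 2 - ‖Z y‖ ^ 2)) * (Nr * Vr) ^ 2
          = (Nr * Vr * (‖x‖ ^ 2 + ‖X x‖ ^ 2) - 2 * (Nr * Wr) * ‖X x‖ ^ 2)
            * (Nr * Vr * (‖y‖ ^ 2 - ‖Z y‖ ^ 2)) := by
        field_simp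
      rw [key2, key3]
      exact h3
    -- pass to the limit m → ∞
    have hθlim : Filter.Tendsto (fun m : ℕ => (m : ℝ) / (m + 1)) Filter.atTop (nhds 1) := by
      have h0 := tendsto_one_div_add_atTop_nhds_zero_nat (𝕜 := ℝ)
      have e : (fun m : ℕ => (m : ℝ) / (m + 1)) = fun m : ℕ => 1 - 1 / ((m : ℝ) + 1) := by
        funext m
        have hm : ((m : ℝ) + 1) ≠ 0 := by positivity
        field_simp
        ring
      rw [e]
      simpa using (tendsto_const_nhds (x := (1:ℝ)) (f := Filter.atTop)).sub h0
    have hl : Filter.Tendsto (fun m : ℕ => ((m : ℝ) / (m + 1) * L) ^ 2)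
        Filter.atTop (nhds (L ^ 2)) := by
      have := (hθlim.mul_const L).pow 2
      simpa using this
    have hr : Filter.Tendsto
        (fun m : ℕ => (‖x‖ ^ 2 + ‖X x‖ ^ 2 - 2 * ((m : ℝ) / (m + 1)) * ‖X x‖ ^ 2)
          * (‖y‖ ^ 2 - ‖Z y‖ ^ 2)) Filter.atTop
        (nhds ((‖x‖ ^ 2 + ‖X x‖ ^ 2 - 2 * 1 * ‖X x‖ ^ 2) * (‖y‖ ^ 2 - ‖Z y‖ ^ 2))) := by
      refine Filter.Tendsto.mul_const _ ?_
      refine Filter.Tendsto.const_sub _ ?_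
      exact (hθlim.const_mul 2).mul_const _
    have hlim := le_of_tendsto_of_tendsto' hl hr step
    calc L ^ 2 ≤ (‖x‖ ^ 2 + ‖X x‖ ^ 2 - 2 * 1 * ‖X x‖ ^ 2) * (‖y‖ ^ 2 - ‖Z y‖ ^ 2) := hlim
      _ = (‖x‖ ^ 2 - ‖X x‖ ^ 2) * (‖y‖ ^ 2 - ‖Z y‖ ^ 2) := by ring
  -- from the sesquilinear bound to the operator-norm bound
  have bound : ∀ x y : H, ‖⟪x, (φ (star a * b) - star X * Z) y⟫‖ ^ 2
      ≤ (RA * RB) * (‖x‖ ^ 2 * ‖y‖ ^ 2) := by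
    intro x y
    have h1 := key x y
    have h2 := hGA x
    have h3 := hGB y
    have h4 := hβ y
    have h5 : (‖x‖ ^ 2 - ‖X x‖ ^ 2) * (‖y‖ ^ 2 - ‖Z y‖ ^ 2)
        ≤ (RA * ‖x‖ ^ 2) * (‖y‖ ^ 2 - ‖Z y‖ ^ 2) :=
      mul_le_mul_of_nonneg_right h2 h4
    have h6 : (RA * ‖x‖ ^ 2) * (‖y‖ ^ 2 - ‖Z y‖ ^ 2) ≤ (RA * ‖x‖ ^ 2) * (RB * ‖y‖ ^ 2) := by
      refine mul_le_mul_of_nonneg_left h3 ?_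
      have : (0:ℝ) ≤ RA := norm_nonneg _
      positivity
    calc ‖⟪x, (φ (star a * b) - star X * Z) y⟫‖ ^ 2
        ≤ (‖x‖ ^ 2 - ‖X x‖ ^ 2) * (‖y‖ ^ 2 - ‖Z y‖ ^ 2) := h1
      _ ≤ (RA * ‖x‖ ^ 2) * (RB * ‖y‖ ^ 2) := le_trans h5 h6
      _ = (RA * RB) * (‖x‖ ^ 2 * ‖y‖ ^ 2) := by ring
  have opb : ∀ y : H, ‖(φ (star a * b) - star X * Z) y‖ ≤ Real.sqrt (RA * RB) * ‖y‖ := by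
    intro y
    by_cases hz : (φ (star a * b) - star X * Z) y = 0
    · rw [hz, norm_zero]
      have : (0:ℝ) ≤ RA := norm_nonneg _
      positivity
    · set v : H := (φ (star a * b) - star X * Z) y with hv
      have hb0 := bound v y
      have hvi : ‖⟪v, (φ (star a * b) - star X * Z) y⟫‖ = ‖v‖ ^ 2 := by
        rw [← hv, inner_self_c]
        rw [Complex.norm_real, Real.norm_eq_abs, _root_.abs_of_nonneg (by positivity)]
      rw [hvi] at hb0
      have hvpos : 0 < ‖v‖ := norm_pos_iff.mpr hz
      have h5 : ‖v‖ ^ 2 ≤ RA * RB * ‖y‖ ^ 2 := by nlinarith [hb0, mul_pos hvpos hvpos]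
      have h6 : ‖v‖ = Real.sqrt (‖v‖ ^ 2) := (Real.sqrt_sq (norm_nonneg _)).symm
      rw [h6]
      calc Real.sqrt (‖v‖ ^ 2) ≤ Real.sqrt (RA * RB * ‖y‖ ^ 2) := Real.sqrt_le_sqrt h5
        _ = Real.sqrt (RA * RB) * ‖y‖ := by
            rw [Real.sqrt_mul (by positivity), Real.sqrt_sq (norm_nonneg _)]
  have hop : ‖φ (star a * b) - star X * Z‖ ≤ Real.sqrt (RA * RB) :=
    ContinuousLinearMap.opNorm_le_bound _ (Real.sqrt_nonneg _) opb
  calc ‖φ (star a * b) - star X * Z‖ ^ 2 ≤ Real.sqrt (RA * RB) ^ 2 := by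
        refine pow_le_pow_left₀ (norm_nonneg _) hop 2
    _ = RA * RB := Real.sq_sqrt (by positivity)


end GrussProofAux

/-- For a unital 2-positive linear map `φ : B → B(H)` and unitaries `a, b ∈ B`,
`‖φ(a*b) - φ(a)*φ(b)‖² ≤ ‖φ(a*a) - φ(a)*φ(a)‖ * ‖φ(b*b) - φ(b)*φ(b)‖`.
2-positivity is expressed via the canonical positive cone of a C*-algebra. -/
theorem sq_norm_gruss_star_unitary_of_two_positive
    {B : Type*} [CStarAlgebra B]
    {H : Type*} [NormedAddCommGroup H] [InnerProductSpace ℂ H] [CompleteSpace H]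
    (φ : B →ₗ[ℂ] (H →L[ℂ] H))
    (hunital : φ 1 = 1)
    (h2pos : ∀ M : Matrix (Fin 2) (Fin 2) B,
      (∃ S : Matrix (Fin 2) (Fin 2) B, M = star S * S) →
      ∃ T : Matrix (Fin 2) (Fin 2) (H →L[ℂ] H), M.map φ = star T * T)
    (a b : B) (ha : a ∈ unitary B) (hb : b ∈ unitary B) :
    ‖φ (star a * b) - star (φ a) * φ b‖ ^ 2 ≤
      ‖φ (star a * a) - star (φ a) * φ a‖ * ‖φ (star b * b) - star (φ b) * φ b‖ :=
  GrussProofAux.final φ hunital h2pos a b ha hb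
end

section
/- Let A be a unital C*-algebra with unit e, H a complex Hilbert space, and φ : A → B(H) a unital positive linear map. If a ∈ A is a normal element, then ‖φ(aa*) − φ(a)φ(a)*‖ ≤ (inf_{λ∈ℂ} ‖a − λe‖)². -/
open scoped ComplexOrder

set_option maxHeartbeats 2000000
set_option synthInstance.maxHeartbeats 200000

namespace VarianceAux

/-- Sandwich lemma: a selfadjoint element squeezed between `±c•1` has norm at most `c`. -/
lemma norm_le_of_sandwich {B : Type*} [CStarAlgebra B] [PartialOrder B] [StarOrderedRing B]
    {T : B} {c : ℝ} (hc : 0 ≤ c) (hT : IsSelfAdjoint T)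
    (h1 : T ≤ algebraMap ℝ B c) (h2 : -(algebraMap ℝ B c) ≤ T) : ‖T‖ ≤ c := by
  obtain h | h := subsingleton_or_nontrivial B
  · simp [Subsingleton.elim T 0, hc]
  · have hup : ∀ x ∈ spectrum ℝ T, x ≤ c := (le_algebraMap_iff_spectrum_le hT).mp h1
    have hdn : ∀ x ∈ spectrum ℝ T, -c ≤ x := by
      have h2' : algebraMap ℝ B (-c) ≤ T := by rwa [map_neg]
      exact (algebraMap_le_iff_le_spectrum hT).mp h2'
    rcases CStarAlgebra.norm_or_neg_norm_mem_spectrum hT with h' | h'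
    · exact hup _ h'
    · linarith [hdn _ h']

lemma algebraMap_real_nonneg {B : Type*} [CStarAlgebra B] [PartialOrder B] [StarOrderedRing B]
    {r : ℝ} (hr : 0 ≤ r) : 0 ≤ algebraMap ℝ B r := by
  have hsa : star (algebraMap ℝ B (Real.sqrt r)) = algebraMap ℝ B (Real.sqrt r) := by
    simp [Algebra.algebraMap_eq_smul_one, star_smul]
  have : algebraMap ℝ B r
      = star (algebraMap ℝ B (Real.sqrt r)) * algebraMap ℝ B (Real.sqrt r) := by
    rw [hsa, ← map_mul, Real.mul_self_sqrt hr]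
  rw [this]
  exact star_mul_self_nonneg _

lemma algebraMap_real_mono {B : Type*} [CStarAlgebra B] [PartialOrder B] [StarOrderedRing B]
    {c d : ℝ} (h : c ≤ d) : algebraMap ℝ B c ≤ algebraMap ℝ B d := by
  have := algebraMap_real_nonneg (B := B) (sub_nonneg.mpr h)
  rw [map_sub] at this
  exact sub_nonneg.mp this

variable {A : Type*} [CStarAlgebra A] [PartialOrder A] [StarOrderedRing A]
variable {H : Type*} [NormedAddCommGroup H] [InnerProductSpace ℂ H] [CompleteSpace H]

section Phi
variable (φ : A →ₗ[ℂ] (H →L[ℂ] H))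

lemma mono (hpos : ∀ x : A, 0 ≤ x → 0 ≤ φ x) {x y : A} (h : x ≤ y) : φ x ≤ φ y := by
  have := hpos (y - x) (sub_nonneg.mpr h)
  rw [map_sub] at this
  exact sub_nonneg.mp this

lemma isSelfAdjoint_apply (hpos : ∀ x : A, 0 ≤ x → 0 ≤ φ x) {x : A} (hx : IsSelfAdjoint x) :
    IsSelfAdjoint (φ x) := by
  rw [← CFC.posPart_sub_negPart x hx, map_sub]
  exact (IsSelfAdjoint.of_nonneg (hpos _ (CFC.posPart_nonneg x))).sub
    (IsSelfAdjoint.of_nonneg (hpos _ (CFC.negPart_nonneg x)))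

lemma apply_algebraMap (hunital : φ 1 = 1) (c : ℝ) :
    φ (algebraMap ℝ A c) = algebraMap ℝ (H →L[ℂ] H) c := by
  have h1 : algebraMap ℝ A c = (c : ℂ) • (1 : A) := by
    rw [IsScalarTower.algebraMap_apply ℝ ℂ A, Algebra.algebraMap_eq_smul_one]
    norm_num
  have h2 : algebraMap ℝ (H →L[ℂ] H) c = (c : ℂ) • (1 : H →L[ℂ] H) := by
    rw [IsScalarTower.algebraMap_apply ℝ ℂ (H →L[ℂ] H), Algebra.algebraMap_eq_smul_one]
    norm_num
  rw [h1, h2, map_smul, hunital]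

lemma norm_apply_le_of_isSelfAdjoint (hunital : φ 1 = 1) (hpos : ∀ x : A, 0 ≤ x → 0 ≤ φ x)
    {x : A} (hx : IsSelfAdjoint x) : ‖φ x‖ ≤ ‖x‖ := by
  refine norm_le_of_sandwich (norm_nonneg x) (isSelfAdjoint_apply φ hpos hx) ?_ ?_
  · have := mono φ hpos hx.le_algebraMap_norm_self
    rwa [apply_algebraMap φ hunital] at this
  · have := mono φ hpos hx.neg_algebraMap_norm_le_self
    rwa [map_neg, apply_algebraMap φ hunital] at this

lemma apply_star (hpos : ∀ x : A, 0 ≤ x → 0 ≤ φ x) (x : A) : φ (star x) = star (φ x) := by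
  set h := x + star x with hh
  set k := Complex.I • (x - star x) with hk
  have hsh : IsSelfAdjoint h := by
    simp [hh, IsSelfAdjoint, star_add, add_comm]
  have hsk : IsSelfAdjoint k := by
    simp only [hk, IsSelfAdjoint, star_smul, star_sub, star_star, RCLike.star_def,
      Complex.conj_I, neg_smul, smul_sub]
    module
  have hxx : x = (2⁻¹ : ℂ) • (h - Complex.I • k) := by
    simp only [hh, hk, smul_smul, Complex.I_mul_I, neg_smul, one_smul, smul_sub, smul_add]
    module
  have hsx : star x = (2⁻¹ : ℂ) • (h + Complex.I • k) := by
    simp only [hh, hk, smul_smul, Complex.I_mul_I, neg_smul, one_smul, smul_sub, smul_add]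
    module
  have h1 := (isSelfAdjoint_apply φ hpos hsh).star_eq
  have h2 := (isSelfAdjoint_apply φ hpos hsk).star_eq
  rw [hsx, map_smul, map_add, map_smul]
  conv_rhs => rw [hxx, map_smul, map_sub, map_smul, star_smul, star_sub, star_smul, h1, h2]
  have : star (2⁻¹ : ℂ) = (2⁻¹ : ℂ) := by
    simp [RCLike.star_def]
  rw [this]
  have : star Complex.I = -Complex.I := by simp [RCLike.star_def, Complex.conj_I]
  rw [this]
  module

lemma norm_apply_le_two_mul (hunital : φ 1 = 1) (hpos : ∀ x : A, 0 ≤ x → 0 ≤ φ x) (x : A) :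
    ‖φ x‖ ≤ 2 * ‖x‖ := by
  set h := x + star x with hh
  set k := Complex.I • (x - star x) with hk
  have hsh : IsSelfAdjoint h := by
    simp [hh, IsSelfAdjoint, star_add, add_comm]
  have hsk : IsSelfAdjoint k := by
    simp only [hk, IsSelfAdjoint, star_smul, star_sub, star_star, RCLike.star_def,
      Complex.conj_I, neg_smul, smul_sub]
    module
  have hxx : x = (2⁻¹ : ℂ) • (h - Complex.I • k) := by
    simp only [hh, hk, smul_smul, Complex.I_mul_I, neg_smul, one_smul, smul_sub, smul_add]
    module
  have hnh : ‖h‖ ≤ 2 * ‖x‖ := by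
    calc ‖x + star x‖ ≤ ‖x‖ + ‖star x‖ := norm_add_le _ _
      _ = 2 * ‖x‖ := by rw [norm_star]; ring
  have hnk : ‖k‖ ≤ 2 * ‖x‖ := by
    rw [hk, norm_smul]
    simp only [Complex.norm_I, one_mul]
    calc ‖x - star x‖ ≤ ‖x‖ + ‖star x‖ := norm_sub_le _ _
      _ = 2 * ‖x‖ := by rw [norm_star]; ring
  calc ‖φ x‖ = ‖(2⁻¹ : ℂ) • (φ h - Complex.I • φ k)‖ := by
        rw [hxx, map_smul, map_sub, map_smul]
    _ ≤ 2⁻¹ * (‖φ h‖ + ‖Complex.I • φ k‖) := by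
        rw [norm_smul]
        gcongr
        · simp
        · exact norm_sub_le _ _
    _ ≤ 2⁻¹ * (‖h‖ + ‖k‖) := by
        gcongr
        · exact norm_apply_le_of_isSelfAdjoint φ hunital hpos hsh
        · rw [norm_smul]
          simp only [Complex.norm_I, one_mul]
          exact norm_apply_le_of_isSelfAdjoint φ hunital hpos hsk
    _ ≤ 2⁻¹ * (2 * ‖x‖ + 2 * ‖x‖) := by gcongr
    _ = 2 * ‖x‖ := by ring

end Phi

/-- If `Pⱼ ≥ 0` sum to `1`, then `‖Σ xⱼ • Pⱼ‖ ≤ max ‖xⱼ‖`. -/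
lemma norm_sum_smul_le {ι : Type*} (s : Finset ι) (P : ι → H →L[ℂ] H)
    (hP : ∀ j ∈ s, 0 ≤ P j) (hsum : ∑ j ∈ s, P j = 1)
    (x : ι → ℂ) (M : ℝ) (hM : 0 ≤ M) (hx : ∀ j ∈ s, ‖x j‖ ≤ M) :
    ‖∑ j ∈ s, x j • P j‖ ≤ M := by
  set Q : ι → H →L[ℂ] H := fun j => CFC.sqrt (P j) with hQdef
  have hQ : ∀ j ∈ s, ∀ v w : H, (inner ℂ ((P j) v) w : ℂ) = inner ℂ (Q j v) (Q j w) := by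
    intro j hj v w
    conv_lhs => rw [← CFC.sqrt_mul_sqrt_self (P j) (hP j hj)]
    rw [ContinuousLinearMap.mul_apply, ← ContinuousLinearMap.adjoint_inner_right,
      ← ContinuousLinearMap.star_eq_adjoint, (CFC.sqrt_nonneg (P j)).isSelfAdjoint.star_eq]
  have hQ' : ∀ j ∈ s, ∀ v w : H, (inner ℂ v ((P j) w) : ℂ) = inner ℂ (Q j v) (Q j w) := by
    intro j hj v w
    conv_lhs => rw [← CFC.sqrt_mul_sqrt_self (P j) (hP j hj)]
    rw [ContinuousLinearMap.mul_apply, ← ContinuousLinearMap.adjoint_inner_left,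
      ← ContinuousLinearMap.star_eq_adjoint, (CFC.sqrt_nonneg (P j)).isSelfAdjoint.star_eq]
  have sumsq : ∀ v : H, ∑ j ∈ s, ‖Q j v‖ ^ 2 = ‖v‖ ^ 2 := by
    intro v
    have h1 : ∀ j ∈ s, ‖Q j v‖ ^ 2 = (inner ℂ ((P j) v) v : ℂ).re := by
      intro j hj
      rw [hQ j hj v v, inner_self_eq_norm_sq_to_K]
      simp [← Complex.ofReal_pow]
    rw [Finset.sum_congr rfl h1]
    have : ∑ j ∈ s, (inner ℂ ((P j) v) v : ℂ).re = ((inner ℂ ((∑ j ∈ s, P j) v) v : ℂ)).re := by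
      rw [ContinuousLinearMap.sum_apply, sum_inner]
      exact (Complex.re_sum _ _).symm
    rw [this, hsum]
    simp [inner_self_eq_norm_sq_to_K, ← Complex.ofReal_pow]
  set T := ∑ j ∈ s, x j • P j with hTdef
  refine T.opNorm_le_bound hM fun ξ => ?_
  have key : ∀ η : H, ‖(inner ℂ η (T ξ) : ℂ)‖ ≤ M * (‖η‖ * ‖ξ‖) := by
    intro η
    have hexp : (inner ℂ η (T ξ) : ℂ) = ∑ j ∈ s, x j * inner ℂ (Q j η) (Q j ξ) := by
      rw [hTdef, ContinuousLinearMap.sum_apply, inner_sum]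
      refine Finset.sum_congr rfl fun j hj => ?_
      rw [ContinuousLinearMap.smul_apply, inner_smul_right, hQ' j hj]
    rw [hexp]
    calc ‖∑ j ∈ s, x j * inner ℂ (Q j η) (Q j ξ)‖
        ≤ ∑ j ∈ s, ‖x j * (inner ℂ (Q j η) (Q j ξ) : ℂ)‖ := norm_sum_le _ _
      _ ≤ ∑ j ∈ s, M * (‖Q j η‖ * ‖Q j ξ‖) := by
          refine Finset.sum_le_sum fun j hj => ?_
          rw [norm_mul]
          exact mul_le_mul (hx j hj) (norm_inner_le_norm _ _) (norm_nonneg _) hM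
      _ = M * ∑ j ∈ s, ‖Q j η‖ * ‖Q j ξ‖ := by rw [Finset.mul_sum]
      _ ≤ M * (Real.sqrt (∑ j ∈ s, ‖Q j η‖ ^ 2) * Real.sqrt (∑ j ∈ s, ‖Q j ξ‖ ^ 2)) := by
          gcongr
          exact Real.sum_mul_le_sqrt_mul_sqrt _ _ _
      _ = M * (‖η‖ * ‖ξ‖) := by
          rw [sumsq η, sumsq ξ, Real.sqrt_sq (norm_nonneg _), Real.sqrt_sq (norm_nonneg _)]
  have h2 := key (T ξ)
  rw [inner_self_eq_norm_sq_to_K] at h2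
  have h2' : ‖T ξ‖ ^ 2 ≤ M * (‖T ξ‖ * ‖ξ‖) := by
    simpa [norm_pow, RCLike.norm_ofReal] using h2
  by_cases hz : ‖T ξ‖ = 0
  · rw [hz]; positivity
  · have hpos' : 0 < ‖T ξ‖ := lt_of_le_of_ne (norm_nonneg _) (Ne.symm hz)
    nlinarith [h2', hpos']

/-- A unital positive map is contractive on normal elements. -/
lemma norm_apply_le_of_isStarNormal (φ : A →ₗ[ℂ] (H →L[ℂ] H)) (hunital : φ 1 = 1)
    (hpos : ∀ x : A, 0 ≤ x → 0 ≤ φ x) (b : A) (hb : IsStarNormal b) :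
    ‖φ b‖ ≤ ‖b‖ := by
  obtain hA | hA := subsingleton_or_nontrivial A
  · rw [Subsingleton.elim b 0, map_zero]
    simp
  have aux : ∀ δ : ℝ, 0 < δ → ‖φ b‖ ≤ ‖b‖ + 2 * δ := by
    intro δ hδ
    set K := spectrum ℂ b with hK
    obtain ⟨t, htK, hcover⟩ := (spectrum.isCompact (𝕜 := ℂ) b).elim_nhds_subcover
      (fun z => Metric.ball z δ) (fun z _ => Metric.ball_mem_nhds z hδ)
    set hfun : ℂ → ℂ → ℝ := fun l z => max (δ - dist z l) 0 with hfun_def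
    have hfun_nonneg : ∀ l z, 0 ≤ hfun l z := fun l z => le_max_right _ _
    have hfun_cont : ∀ l, Continuous (hfun l) := fun l =>
      ((continuous_const.sub (continuous_id.dist continuous_const)).max continuous_const)
    set S : ℂ → ℝ := fun z => ∑ l ∈ t, hfun l z with hS_def
    have hS_cont : Continuous S := continuous_finset_sum _ fun l _ => hfun_cont l
    have hS_nonneg : ∀ z, 0 ≤ S z := fun z => Finset.sum_nonneg fun l _ => hfun_nonneg l z
    have hS_pos : ∀ z ∈ K, 0 < S z := by
      intro z hz
      obtain ⟨l, hlt, hzl⟩ := Set.mem_iUnion₂.mp (hcover hz)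
      refine Finset.sum_pos' (fun l _ => hfun_nonneg l z) ⟨l, hlt, ?_⟩
      have : dist z l < δ := Metric.mem_ball.mp hzl
      simp only [hfun_def]
      exact lt_max_of_lt_left (by linarith)
    set g : ℂ → ℂ → ℂ := fun l z => ((hfun l z / S z : ℝ) : ℂ) with hg_def
    have hg_cont : ∀ l ∈ t, ContinuousOn (g l) K := by
      intro l _
      exact Complex.continuous_ofReal.comp_continuousOn
        (((hfun_cont l).continuousOn).div hS_cont.continuousOn
          (fun z hz => (hS_pos z hz).ne'))
    have hg_nonneg : ∀ l z, (0 : ℂ) ≤ g l z := by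
      intro l z
      have h0 : (0:ℝ) ≤ hfun l z / S z := div_nonneg (hfun_nonneg l z) (hS_nonneg z)
      simpa only [hg_def] using Complex.zero_le_real.mpr h0
    have hgsum : ∀ z ∈ K, ∑ l ∈ t, g l z = 1 := by
      intro z hz
      simp only [hg_def]
      rw [← Complex.ofReal_sum, ← Finset.sum_div, div_self (hS_pos z hz).ne']
      norm_num
    have hcfc_sum : ∑ l ∈ t, cfc (g l) b = 1 := by
      rw [← cfc_sum (fun l => g l) b t hg_cont]
      calc cfc (∑ l ∈ t, g l) b = cfc (1 : ℂ → ℂ) b := by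
            refine cfc_congr fun z hz => ?_
            simpa [Finset.sum_apply] using hgsum z hz
        _ = 1 := cfc_one ℂ b
    set P : ℂ → (H →L[ℂ] H) := fun l => φ (cfc (g l) b) with hP_def
    have hPpos : ∀ l ∈ t, 0 ≤ P l := by
      intro l hl
      exact hpos _ (cfc_nonneg fun z hz => hg_nonneg l z)
    have hPsum : ∑ l ∈ t, P l = 1 := by
      rw [hP_def, ← map_sum, hcfc_sum, hunital]
    -- approximation
    have e1 : ∑ l ∈ t, l • cfc (g l) b = cfc (fun z => ∑ l ∈ t, l * g l z) b := by
      have : (fun z => ∑ l ∈ t, l * g l z) = ∑ l ∈ t, (fun z => l * g l z) := by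
        ext z; simp [Finset.sum_apply]
      rw [this, cfc_sum (fun l z => l * g l z) b t (fun l hl => continuousOn_const.mul (hg_cont l hl))]
      exact (Finset.sum_congr rfl fun l hl => (cfc_const_mul l (g l) b (hg_cont l hl))).symm
    have hsum_cont : ContinuousOn (fun z : ℂ => ∑ l ∈ t, l * g l z) K :=
      continuousOn_finset_sum _ fun l hl => continuousOn_const.mul (hg_cont l hl)
    have e2 : b - ∑ l ∈ t, l • cfc (g l) b
        = cfc (fun z : ℂ => z - ∑ l ∈ t, l * g l z) b := by
      rw [cfc_sub (fun z : ℂ => z) _ b (continuousOn_id) hsum_cont, cfc_id' ℂ b, e1]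
    have happrox : ‖b - ∑ l ∈ t, l • cfc (g l) b‖ ≤ δ := by
      rw [e2]
      refine norm_cfc_le hδ.le fun z hz => ?_
      have hz1 : z - ∑ l ∈ t, l * g l z = ∑ l ∈ t, (z - l) * g l z := by
        simp only [sub_mul]
        rw [Finset.sum_sub_distrib, ← Finset.mul_sum, hgsum z hz, mul_one]
      rw [hz1]
      calc ‖∑ l ∈ t, (z - l) * g l z‖ ≤ ∑ l ∈ t, ‖(z - l) * g l z‖ := norm_sum_le _ _
        _ ≤ ∑ l ∈ t, δ * (hfun l z / S z) := by
            refine Finset.sum_le_sum fun l hl => ?_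
            rw [norm_mul, hg_def]
            simp only [Complex.norm_real]
            rw [Real.norm_eq_abs, abs_of_nonneg (div_nonneg (hfun_nonneg l z) (hS_nonneg z))]
            rcases eq_or_lt_of_le (hfun_nonneg l z) with h0 | h0
            · rw [← h0]
              simp
            · have hd : dist z l < δ := by
                by_contra hcon
                push_neg at hcon
                have : hfun l z = 0 := by
                  simp only [hfun_def]
                  exact max_eq_right (by linarith)
                rw [this] at h0
                exact lt_irrefl 0 h0
              have : ‖z - l‖ ≤ δ := by
                simpa [Complex.dist_eq] using hd.le
              exact mul_le_mul_of_nonneg_right this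
                (div_nonneg (hfun_nonneg l z) (hS_nonneg z))
        _ = δ * ∑ l ∈ t, hfun l z / S z := by rw [Finset.mul_sum]
        _ = δ := by
            rw [← Finset.sum_div, div_self (hS_pos z hz).ne', mul_one]
    -- assemble
    have hdecomp : φ b = (∑ l ∈ t, l • P l) + φ (b - ∑ l ∈ t, l • cfc (g l) b) := by
      rw [map_sub, map_sum]
      simp only [map_smul, hP_def]
      abel
    have hfirst : ‖∑ l ∈ t, l • P l‖ ≤ ‖b‖ := by
      refine norm_sum_smul_le t P hPpos hPsum _ ‖b‖ (norm_nonneg b) fun l hl => ?_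
      exact spectrum.norm_le_norm_of_mem (htK l hl)
    have hsecond : ‖φ (b - ∑ l ∈ t, l • cfc (g l) b)‖ ≤ 2 * δ := by
      calc ‖φ (b - ∑ l ∈ t, l • cfc (g l) b)‖
          ≤ 2 * ‖b - ∑ l ∈ t, l • cfc (g l) b‖ := norm_apply_le_two_mul φ hunital hpos _
        _ ≤ 2 * δ := by linarith [happrox]
    calc ‖φ b‖ ≤ ‖∑ l ∈ t, l • P l‖ + ‖φ (b - ∑ l ∈ t, l • cfc (g l) b)‖ := by
          rw [hdecomp]; exact norm_add_le _ _
      _ ≤ ‖b‖ + 2 * δ := add_le_add hfirst hsecond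
  refine le_of_forall_pos_le_add fun ε hε => ?_
  have := aux (ε / 2) (by linarith)
  linarith

end VarianceAux

/-- (Corollary 3.3). If `φ : A → B(H)` is a unital positive linear map and `a ∈ A` is normal,
then `‖φ(aa*) - φ(a)φ(a)*‖ ≤ (inf_λ ‖a - λ1‖)²`. -/
theorem variance_bound_of_positive_normal
    {A : Type*} [CStarAlgebra A] [PartialOrder A] [StarOrderedRing A]
    {H : Type*} [NormedAddCommGroup H] [InnerProductSpace ℂ H] [CompleteSpace H]
    (φ : A →ₗ[ℂ] (H →L[ℂ] H))
    (hunital : φ 1 = 1)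
    (hpos : ∀ x : A, 0 ≤ x → 0 ≤ φ x)
    (a : A) (ha : star a * a = a * star a) :
    ‖φ (a * star a) - φ a * star (φ a)‖ ≤ (⨅ z : ℂ, ‖a - z • (1 : A)‖) ^ 2 := by
  have hstar : ∀ x : A, φ (star x) = star (φ x) := VarianceAux.apply_star φ hpos
  have key : ∀ z : ℂ, ‖φ (a * star a) - φ a * star (φ a)‖ ≤ ‖a - z • (1 : A)‖ ^ 2 := by
    intro z
    set b := a - z • (1 : A) with hbdef
    have hbn : IsStarNormal b := by
      constructor
      show star b * b = b * star b
      simp only [hbdef, star_sub, star_smul, star_one, sub_mul, mul_sub, smul_mul_assoc,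
        mul_smul_comm, smul_smul, mul_one, one_mul, ha]
      module
    have hphib : φ b = φ a - z • 1 := by
      rw [hbdef, map_sub, map_smul, hunital]
    have hid : φ (a * star a) - φ a * star (φ a) = φ (b * star b) - φ b * star (φ b) := by
      have hexp : b * star b
          = a * star a - star z • a - z • star a + (z * star z) • (1 : A) := by
        simp only [hbdef, star_sub, star_smul, star_one, sub_mul, mul_sub, smul_mul_assoc,
          mul_smul_comm, smul_smul, mul_one, one_mul]
        module
      rw [hexp, map_add, map_sub, map_sub, map_smul, map_smul, map_smul, hunital, hphib,
        hstar a]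
      rw [star_sub, star_smul, star_one]
      simp only [sub_mul, mul_sub, smul_mul_assoc, mul_smul_comm, smul_smul, mul_one, one_mul]
      module
    have hTsa : IsSelfAdjoint (φ (a * star a) - φ a * star (φ a)) :=
      (IsSelfAdjoint.of_nonneg (hpos _ (mul_star_self_nonneg a))).sub
        (IsSelfAdjoint.of_nonneg (mul_star_self_nonneg (φ a)))
    have h1 : φ (a * star a) - φ a * star (φ a) ≤ algebraMap ℝ (H →L[ℂ] H) (‖b‖ ^ 2) := by
      rw [hid]
      calc φ (b * star b) - φ b * star (φ b) ≤ φ (b * star b) :=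
            sub_le_self _ (mul_star_self_nonneg (φ b))
        _ ≤ algebraMap ℝ (H →L[ℂ] H) (‖b‖ ^ 2) := by
            have := VarianceAux.mono φ hpos
              (CStarAlgebra.mul_star_le_algebraMap_norm_sq (a := b))
            rwa [VarianceAux.apply_algebraMap φ hunital] at this
    have h2 : -(algebraMap ℝ (H →L[ℂ] H) (‖b‖ ^ 2))
        ≤ φ (a * star a) - φ a * star (φ a) := by
      rw [hid]
      have hb1 : φ b * star (φ b) ≤ algebraMap ℝ (H →L[ℂ] H) (‖φ b‖ ^ 2) :=
        CStarAlgebra.mul_star_le_algebraMap_norm_sq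
      have hnb : ‖φ b‖ ≤ ‖b‖ :=
        VarianceAux.norm_apply_le_of_isStarNormal φ hunital hpos b hbn
      have hb2 : algebraMap ℝ (H →L[ℂ] H) (‖φ b‖ ^ 2)
          ≤ algebraMap ℝ (H →L[ℂ] H) (‖b‖ ^ 2) :=
        VarianceAux.algebraMap_real_mono (pow_le_pow_left₀ (norm_nonneg _) hnb 2)
      have e3 : (0 : H →L[ℂ] H) ≤ φ (b * star b) := hpos _ (mul_star_self_nonneg b)
      calc -(algebraMap ℝ (H →L[ℂ] H) (‖b‖ ^ 2)) ≤ -(φ b * star (φ b)) :=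
            neg_le_neg (hb1.trans hb2)
        _ = 0 - φ b * star (φ b) := by rw [zero_sub]
        _ ≤ φ (b * star b) - φ b * star (φ b) := sub_le_sub_right e3 _
    exact VarianceAux.norm_le_of_sandwich (by positivity) hTsa h1 h2
  have hsqrt : ∀ z : ℂ, Real.sqrt ‖φ (a * star a) - φ a * star (φ a)‖ ≤ ‖a - z • (1 : A)‖ := by
    intro z
    calc Real.sqrt ‖φ (a * star a) - φ a * star (φ a)‖
        ≤ Real.sqrt (‖a - z • (1 : A)‖ ^ 2) := Real.sqrt_le_sqrt (key z)
      _ = ‖a - z • (1 : A)‖ := Real.sqrt_sq (norm_nonneg _)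
  have hle : Real.sqrt ‖φ (a * star a) - φ a * star (φ a)‖
      ≤ ⨅ z : ℂ, ‖a - z • (1 : A)‖ := le_ciInf hsqrt
  calc ‖φ (a * star a) - φ a * star (φ a)‖
      = (Real.sqrt ‖φ (a * star a) - φ a * star (φ a)‖) ^ 2 :=
        (Real.sq_sqrt (norm_nonneg _)).symm
    _ ≤ (⨅ z : ℂ, ‖a - z • (1 : A)‖) ^ 2 :=
        pow_le_pow_left₀ (Real.sqrt_nonneg _) hle 2
end

section
/- Let A be a unital C*-algebra with unit e, H a complex Hilbert space, and φ : A → B(H) a unital completely positive linear map. Then for all a, b ∈ A, ‖φ(ab) − φ(a)φ(b)‖ ≤ (inf_{λ∈ℂ} ‖a − λe‖) · (inf_{μ∈ℂ} ‖b − μe‖). -/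
section gruss_helpers

variable {A : Type*} [CStarAlgebra A]
  {H : Type*} [NormedAddCommGroup H] [InnerProductSpace ℂ H] [CompleteSpace H]

local notation "⟪" x ", " y "⟫" => @inner ℂ _ _ x y

private lemma gruss_inner_self_nonneg (x : H) : 0 ≤ (⟪x, x⟫ : ℂ).re := by
  simp [inner_self_eq_norm_sq_to_K, ← Complex.ofReal_pow]

private lemma gruss_sqrt (c : A) :
    letI := CStarAlgebra.spectralOrder A
    letI := CStarAlgebra.spectralOrderedRing A
    0 ≤ c → ∃ s : A, c = star s * s := by
  letI := CStarAlgebra.spectralOrder A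
  letI := CStarAlgebra.spectralOrderedRing A
  intro hc
  refine ⟨CFC.sqrt c, ?_⟩
  have h1 : IsSelfAdjoint (CFC.sqrt c) := .of_nonneg (CFC.sqrt_nonneg c)
  rw [h1.star_eq, CFC.sqrt_mul_sqrt_self c hc]

private lemma gruss_pos (φ : A →ₗ[ℂ] (H →L[ℂ] H))
    (hcp : ∀ (n : ℕ) (M : Matrix (Fin n) (Fin n) A),
      (∃ S : Matrix (Fin n) (Fin n) A, M = star S * S) →
      ∃ T : Matrix (Fin n) (Fin n) (H →L[ℂ] H), M.map φ = star T * T)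
    (s : A) (ξ : H) : 0 ≤ (⟪ξ, φ (star s * s) ξ⟫).re := by
  obtain ⟨T, hT⟩ := hcp 1 (Matrix.of fun _ _ => star s * s) ⟨Matrix.of fun _ _ => s, by
    ext i j
    simp [Matrix.mul_apply, Matrix.star_apply]⟩
  have h0 : φ (star s * s) = star (T 0 0) * T 0 0 := by
    have := congrFun (congrFun hT 0) 0
    simpa [Matrix.mul_apply, Matrix.star_apply, Matrix.map_apply, Matrix.of_apply] using this
  rw [h0]
  have : (star (T 0 0) * T 0 0) ξ = (T 0 0).adjoint ((T 0 0) ξ) := by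
    simp [ContinuousLinearMap.star_eq_adjoint, ContinuousLinearMap.mul_apply]
  rw [this, ContinuousLinearMap.adjoint_inner_right]
  simp [inner_self_eq_norm_sq_to_K, ← Complex.ofReal_pow]

private lemma gruss_bound (φ : A →ₗ[ℂ] (H →L[ℂ] H)) (hunital : φ 1 = 1)
    (hcp : ∀ (n : ℕ) (M : Matrix (Fin n) (Fin n) A),
      (∃ S : Matrix (Fin n) (Fin n) A, M = star S * S) →
      ∃ T : Matrix (Fin n) (Fin n) (H →L[ℂ] H), M.map φ = star T * T)
    (c : A) (r : ℝ) (h : ∃ s : A, algebraMap ℝ A r - c = star s * s) (ξ : H) :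
    (⟪ξ, φ c ξ⟫).re ≤ r * ‖ξ‖ ^ 2 := by
  obtain ⟨s, hs⟩ := h
  have h0 := gruss_pos φ hcp s ξ
  rw [← hs] at h0
  have halg : algebraMap ℝ A r = (r : ℂ) • (1 : A) := by
    rw [Algebra.algebraMap_eq_smul_one]
    norm_num [← Complex.coe_smul]
  rw [halg, map_sub, map_smul, hunital] at h0
  have hexp : ((r : ℂ) • (1 : (H →L[ℂ] H)) - φ c) ξ = (r : ℂ) • ξ - φ c ξ := by
    simp
  rw [hexp, inner_sub_right, inner_smul_right] at h0
  have h1 : (⟪ξ, ξ⟫).re = ‖ξ‖ ^ 2 := inner_self_eq_norm_sq (𝕜 := ℂ) ξ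
  have h2 : (⟪ξ, ξ⟫).im = 0 := inner_self_im (𝕜 := ℂ) ξ
  rw [Complex.sub_re, Complex.mul_re] at h0
  simp only [Complex.ofReal_re, Complex.ofReal_im, zero_mul, sub_zero, h1, h2] at h0
  linarith

private lemma gruss_key (T : Matrix (Fin 3) (Fin 3) (H →L[ℂ] H)) (v w : Fin 3 → H) :
    (∑ i, ∑ j, ⟪v i, (star T * T) i j (w j)⟫) =
      ∑ k, ⟪∑ i, T k i (v i), ∑ j, T k j (w j)⟫ := by
  have h1 : ∀ i j : Fin 3, (star T * T) i j = ∑ k, star (T k i) * T k j := by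
    intro i j
    simp [Matrix.mul_apply, Matrix.star_apply]
  calc (∑ i, ∑ j, ⟪v i, (star T * T) i j (w j)⟫)
      = ∑ i, ∑ j, ∑ k, ⟪T k i (v i), T k j (w j)⟫ := by
        refine Finset.sum_congr rfl fun i _ => Finset.sum_congr rfl fun j _ => ?_
        rw [h1 i j, ContinuousLinearMap.sum_apply, inner_sum]
        refine Finset.sum_congr rfl fun k _ => ?_
        rw [ContinuousLinearMap.mul_apply, ContinuousLinearMap.star_eq_adjoint,
          ContinuousLinearMap.adjoint_inner_right]
    _ = ∑ k, ∑ i, ∑ j, ⟪T k i (v i), T k j (w j)⟫ := by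
        have h2 : (∑ i, ∑ j, ∑ k, ⟪T k i (v i), T k j (w j)⟫ : ℂ)
            = ∑ i, ∑ k, ∑ j, ⟪T k i (v i), T k j (w j)⟫ :=
          Finset.sum_congr rfl fun i _ => Finset.sum_comm
        rw [h2, Finset.sum_comm]
    _ = ∑ k, ⟪∑ i, T k i (v i), ∑ j, T k j (w j)⟫ := by
        refine Finset.sum_congr rfl fun k _ => ?_
        rw [sum_inner]
        exact Finset.sum_congr rfl fun i _ => (inner_sum _ _ _).symm

private lemma gruss_cs (f g : Fin 3 → H) :
    ‖∑ k, ⟪f k, g k⟫‖ ^ 2 ≤ (∑ k, ⟪f k, f k⟫).re * (∑ k, ⟪g k, g k⟫).re := by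
  let F : PiLp 2 (fun _ : Fin 3 => H) := WithLp.toLp 2 f
  let G : PiLp 2 (fun _ : Fin 3 => H) := WithLp.toLp 2 g
  have hFG : (∑ k, ⟪f k, g k⟫) = ⟪F, G⟫ := (PiLp.inner_apply F G).symm
  have hFF : (∑ k, ⟪f k, f k⟫) = ⟪F, F⟫ := (PiLp.inner_apply F F).symm
  have hGG : (∑ k, ⟪g k, g k⟫) = ⟪G, G⟫ := (PiLp.inner_apply G G).symm
  have h1 : ‖(⟪F, G⟫ : ℂ)‖ ≤ ‖F‖ * ‖G‖ := norm_inner_le_norm F G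
  have h2 : (⟪F, F⟫ : ℂ).re = ‖F‖ ^ 2 := inner_self_eq_norm_sq (𝕜 := ℂ) F
  have h3 : (⟪G, G⟫ : ℂ).re = ‖G‖ ^ 2 := inner_self_eq_norm_sq (𝕜 := ℂ) G
  rw [hFG, hFF, hGG, h2, h3]
  calc ‖(⟪F, G⟫ : ℂ)‖ ^ 2 ≤ (‖F‖ * ‖G‖) ^ 2 := by
        have := norm_nonneg (⟪F, G⟫ : ℂ)
        nlinarith
    _ = ‖F‖ ^ 2 * ‖G‖ ^ 2 := by ring

private lemma gruss_core (φ : A →ₗ[ℂ] (H →L[ℂ] H)) (hunital : φ 1 = 1)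
    (hcp : ∀ (n : ℕ) (M : Matrix (Fin n) (Fin n) A),
      (∃ S : Matrix (Fin n) (Fin n) A, M = star S * S) →
      ∃ T : Matrix (Fin n) (Fin n) (H →L[ℂ] H), M.map φ = star T * T)
    (a b : A) : ‖φ (a * b) - φ a * φ b‖ ≤ ‖a‖ * ‖b‖ := by
  letI := CStarAlgebra.spectralOrder A
  letI := CStarAlgebra.spectralOrderedRing A
  set u : Fin 3 → A := ![1, star a, b] with hu
  set M : Matrix (Fin 3) (Fin 3) A := Matrix.of fun i j => star (u i) * u j with hM
  obtain ⟨T, hT⟩ := hcp 3 M ⟨Matrix.of ![u, 0, 0], by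
    ext i j
    simp [hM, hu, Matrix.mul_apply, Matrix.star_apply, Fin.sum_univ_three,
      Matrix.vecHead, Matrix.vecTail]⟩
  have hent : ∀ i j, (M.map φ) i j = φ (star (u i) * u j) := fun i j => rfl
  have hPs : star (M.map φ) = M.map φ := by rw [hT, star_mul, star_star]
  have hadj : ∀ i j, star ((M.map φ) i j) = (M.map φ) j i := by
    intro i j
    conv_rhs => rw [← hPs]
    simp [Matrix.star_apply]
  have hsa : φ a = star (φ (star a)) := by
    have h := hadj 0 1
    rw [hent 0 1, hent 1 0] at h
    simp only [hu, Matrix.cons_val_zero, Matrix.cons_val_one, Matrix.head_cons,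
      star_one, one_mul, mul_one, star_star] at h
    exact h.symm
  have hsb : φ (star b) = star (φ b) := by
    have h := hadj 0 2
    rw [hent 0 2, hent 2 0] at h
    simp only [hu, Matrix.cons_val_zero, Matrix.cons_val_two, Matrix.tail_cons,
      Matrix.head_cons, star_one, one_mul, mul_one] at h
    exact h.symm
  -- the central estimate on matrix elements
  have hmain : ∀ ξ η : H, ‖⟪ξ, (φ (a * b) - φ a * φ b) η⟫‖ ^ 2 ≤
      (‖a‖ ^ 2 * ‖ξ‖ ^ 2) * (‖b‖ ^ 2 * ‖η‖ ^ 2) := by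
    intro ξ η
    set v : Fin 3 → H := ![-(φ (star a) ξ), ξ, 0] with hv
    set w : Fin 3 → H := ![-(φ b η), 0, η] with hw
    have hvw : (∑ i, ∑ j, ⟪v i, (M.map φ) i j (w j)⟫)
        = ⟪ξ, (φ (a * b) - φ a * φ b) η⟫ := by
      simp only [Fin.sum_univ_three, hent, hv, hw, hu, hM, Matrix.map_apply, Matrix.of_apply,
        Matrix.cons_val_zero, Matrix.cons_val_one, Matrix.cons_val_two,
        Matrix.head_cons, Matrix.tail_cons, star_one, one_mul, mul_one, star_star,
        hunital, ContinuousLinearMap.one_apply, ContinuousLinearMap.sub_apply,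
        ContinuousLinearMap.mul_apply, map_zero, inner_zero_left, inner_zero_right,
        inner_neg_left, inner_neg_right, inner_sub_right, add_zero, zero_add, map_neg]
      ring
    have hvv : (∑ i, ∑ j, ⟪v i, (M.map φ) i j (v j)⟫)
        = ⟪ξ, φ (a * star a) ξ⟫ - ⟪φ (star a) ξ, φ (star a) ξ⟫ := by
      simp only [Fin.sum_univ_three, hent, hv, hu, hM, Matrix.map_apply, Matrix.of_apply,
        Matrix.cons_val_zero, Matrix.cons_val_one, Matrix.cons_val_two,
        Matrix.head_cons, Matrix.tail_cons, star_one, one_mul, mul_one, star_star,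
        hunital, ContinuousLinearMap.one_apply, map_zero, inner_zero_left,
        inner_zero_right, inner_neg_left, inner_neg_right, add_zero, zero_add, map_neg,
        hsa, ContinuousLinearMap.star_eq_adjoint, ContinuousLinearMap.adjoint_inner_right]
      ring
    have hww : (∑ i, ∑ j, ⟪w i, (M.map φ) i j (w j)⟫)
        = ⟪η, φ (star b * b) η⟫ - ⟪φ b η, φ b η⟫ := by
      simp only [Fin.sum_univ_three, hent, hw, hu, hM, Matrix.map_apply, Matrix.of_apply,
        Matrix.cons_val_zero, Matrix.cons_val_one, Matrix.cons_val_two,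
        Matrix.head_cons, Matrix.tail_cons, star_one, one_mul, mul_one, star_star,
        hunital, ContinuousLinearMap.one_apply, map_zero, inner_zero_left,
        inner_zero_right, inner_neg_left, inner_neg_right, add_zero, zero_add, map_neg,
        hsb, ContinuousLinearMap.star_eq_adjoint, ContinuousLinearMap.adjoint_inner_right]
      ring
    have hva : (∑ i, ∑ j, ⟪v i, (M.map φ) i j (v j)⟫).re ≤ ‖a‖ ^ 2 * ‖ξ‖ ^ 2 := by
      rw [hvv, Complex.sub_re]
      have hb1 : (⟪ξ, φ (a * star a) ξ⟫).re ≤ ‖a‖ ^ 2 * ‖ξ‖ ^ 2 := by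
        refine gruss_bound φ hunital hcp _ _ ?_ ξ
        exact gruss_sqrt _ (sub_nonneg.mpr CStarAlgebra.mul_star_le_algebraMap_norm_sq)
      have hb2 : 0 ≤ (⟪φ (star a) ξ, φ (star a) ξ⟫).re := gruss_inner_self_nonneg _
      linarith
    have hwb : (∑ i, ∑ j, ⟪w i, (M.map φ) i j (w j)⟫).re ≤ ‖b‖ ^ 2 * ‖η‖ ^ 2 := by
      rw [hww, Complex.sub_re]
      have hb1 : (⟪η, φ (star b * b) η⟫).re ≤ ‖b‖ ^ 2 * ‖η‖ ^ 2 := by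
        refine gruss_bound φ hunital hcp _ _ ?_ η
        have := CStarAlgebra.star_mul_le_algebraMap_norm_sq (a := b)
        exact gruss_sqrt _ (sub_nonneg.mpr (by simpa using this))
      have hb2 : 0 ≤ (⟪φ b η, φ b η⟫).re := gruss_inner_self_nonneg _
      linarith
    -- combine via Cauchy–Schwarz
    have hk := gruss_key T v w
    have hkv := gruss_key T v v
    have hkw := gruss_key T w w
    rw [← hT] at hk hkv hkw
    have hcs := gruss_cs (fun k => ∑ i, T k i (v i)) (fun k => ∑ j, T k j (w j))
    rw [← hk, ← hkv, ← hkw, hvw] at hcs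
    have hnn1 : 0 ≤ (∑ i, ∑ j, ⟪v i, (M.map φ) i j (v j)⟫).re := by
      rw [hkv]
      have : (0:ℝ) ≤ ∑ k, (⟪∑ i, T k i (v i), ∑ i, T k i (v i)⟫).re := by
        exact Finset.sum_nonneg fun k _ => gruss_inner_self_nonneg _
      simpa [Complex.re_sum] using this
    have hnn2 : 0 ≤ (∑ i, ∑ j, ⟪w i, (M.map φ) i j (w j)⟫).re := by
      rw [hkw]
      have : (0:ℝ) ≤ ∑ k, (⟪∑ i, T k i (w i), ∑ i, T k i (w i)⟫).re := by
        exact Finset.sum_nonneg fun k _ => gruss_inner_self_nonneg _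
      simpa [Complex.re_sum] using this
    calc ‖⟪ξ, (φ (a * b) - φ a * φ b) η⟫‖ ^ 2
        ≤ (∑ i, ∑ j, ⟪v i, (M.map φ) i j (v j)⟫).re
          * (∑ i, ∑ j, ⟪w i, (M.map φ) i j (w j)⟫).re := hcs
      _ ≤ (‖a‖ ^ 2 * ‖ξ‖ ^ 2) * (‖b‖ ^ 2 * ‖η‖ ^ 2) := by
          apply mul_le_mul hva hwb hnn2 (by positivity)
  -- conclude operator norm bound
  refine ContinuousLinearMap.opNorm_le_bound _ (by positivity) fun η => ?_
  set D := φ (a * b) - φ a * φ b with hD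
  have h := hmain (D η) η
  have e1 : (⟪D η, D η⟫).re = ‖D η‖ ^ 2 := inner_self_eq_norm_sq (𝕜 := ℂ) _
  have e2 : ‖D η‖ ^ 2 ≤ ‖(⟪D η, D η⟫ : ℂ)‖ := by
    rw [← e1]
    exact Complex.re_le_norm _
  have h : (‖D η‖ ^ 2) ^ 2 ≤ ‖a‖ ^ 2 * ‖D η‖ ^ 2 * (‖b‖ ^ 2 * ‖η‖ ^ 2) :=
    le_trans (by
      have := pow_le_pow_left₀ (by positivity) e2 2
      simpa using this) h
  rcases eq_or_lt_of_le (norm_nonneg (D η)) with h0 | h0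
  · rw [← h0]
    positivity
  · have h' : (‖D η‖ ^ 2) ^ 2 ≤ (‖a‖ ^ 2 * ‖b‖ ^ 2 * ‖η‖ ^ 2) * ‖D η‖ ^ 2 := by
      calc (‖D η‖ ^ 2) ^ 2 ≤ ‖a‖ ^ 2 * ‖D η‖ ^ 2 * (‖b‖ ^ 2 * ‖η‖ ^ 2) := h
        _ = (‖a‖ ^ 2 * ‖b‖ ^ 2 * ‖η‖ ^ 2) * ‖D η‖ ^ 2 := by ring
    have h2 : ‖D η‖ ^ 2 ≤ ‖a‖ ^ 2 * ‖b‖ ^ 2 * ‖η‖ ^ 2 := by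
      have := le_of_mul_le_mul_right (by simpa [pow_two, mul_comm] using h') (by positivity : (0:ℝ) < ‖D η‖ ^ 2)
      linarith [this]
    nlinarith [norm_nonneg (D η), norm_nonneg a, norm_nonneg b, norm_nonneg η,
      mul_nonneg (mul_nonneg (norm_nonneg a) (norm_nonneg b)) (norm_nonneg η)]

end gruss_helpers

/-- (Remark 3.2). If `φ : A → B(H)` is a unital completely positive linear map on a unital
C*-algebra `A`, then the Grüss inequality
`‖φ(ab) - φ(a)φ(b)‖ ≤ (inf_λ ‖a - λ1‖) * (inf_μ ‖b - μ1‖)` holds for all `a, b ∈ A`.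
Complete positivity is expressed via the canonical positive cone of a C*-algebra:
an element is positive iff it is of the form `star s * s`. -/
theorem gruss_of_completely_positive
    {A : Type*} [CStarAlgebra A]
    {H : Type*} [NormedAddCommGroup H] [InnerProductSpace ℂ H] [CompleteSpace H]
    (φ : A →ₗ[ℂ] (H →L[ℂ] H))
    (hunital : φ 1 = 1)
    (hcp : ∀ (n : ℕ) (M : Matrix (Fin n) (Fin n) A),
      (∃ S : Matrix (Fin n) (Fin n) A, M = star S * S) →
      ∃ T : Matrix (Fin n) (Fin n) (H →L[ℂ] H), M.map φ = star T * T)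
    (a b : A) :
    ‖φ (a * b) - φ a * φ b‖ ≤
      (⨅ z : ℂ, ‖a - z • (1 : A)‖) * (⨅ z : ℂ, ‖b - z • (1 : A)‖) := by
  letI := CStarAlgebra.spectralOrder A
  letI := CStarAlgebra.spectralOrderedRing A
  have hinv : ∀ z w : ℂ, φ (a * b) - φ a * φ b
      = φ ((a - z • 1) * (b - w • 1)) - φ (a - z • 1) * φ (b - w • 1) := by
    intro z w
    have hexp : (a - z • 1) * (b - w • 1) = a * b - w • a - z • b + (z * w) • (1 : A) := by
      simp only [sub_mul, mul_sub, smul_mul_assoc, mul_smul_comm, one_mul, mul_one, smul_smul]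
      module
    rw [hexp, map_add, map_sub, map_sub, map_smul, map_smul, map_smul, map_sub, map_sub,
      map_smul, map_smul, hunital]
    simp only [sub_mul, mul_sub, smul_mul_assoc, mul_smul_comm, one_mul, mul_one, smul_smul]
    module
  have hall : ∀ z w : ℂ, ‖φ (a * b) - φ a * φ b‖ ≤ ‖a - z • 1‖ * ‖b - w • 1‖ := by
    intro z w
    rw [hinv z w]
    exact gruss_core φ hunital hcp _ _
  have hc2 : (0:ℝ) ≤ ⨅ z : ℂ, ‖b - z • (1 : A)‖ :=
    Real.iInf_nonneg fun z => norm_nonneg _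
  have key : ∀ z : ℂ, ‖φ (a * b) - φ a * φ b‖ ≤ ‖a - z • 1‖ * ⨅ w : ℂ, ‖b - w • (1 : A)‖ := by
    intro z
    rcases eq_or_lt_of_le (norm_nonneg (a - z • (1 : A))) with h0 | h0
    · have h := hall z 0
      rw [← h0, zero_mul] at h ⊢
      exact h
    · have h1 : ‖φ (a * b) - φ a * φ b‖ / ‖a - z • (1 : A)‖ ≤ ⨅ w : ℂ, ‖b - w • (1 : A)‖ :=
        le_ciInf fun w => (div_le_iff₀ h0).mpr (by rw [mul_comm]; exact hall z w)
      have h2 := (div_le_iff₀ h0).mp h1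
      rwa [mul_comm] at h2
  rcases eq_or_lt_of_le hc2 with h0 | h0
  · have h := key 0
    rw [← h0, mul_zero] at h ⊢
    exact h
  · have h1 : ‖φ (a * b) - φ a * φ b‖ / (⨅ w : ℂ, ‖b - w • (1 : A)‖)
        ≤ ⨅ z : ℂ, ‖a - z • (1 : A)‖ :=
      le_ciInf fun z => (div_le_iff₀ h0).mpr (key z)
    exact (div_le_iff₀ h0).mp h1
end
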